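/- arXiv:2501.07461 — 4 statements merged into one kernel-verified Lean document; each statement's English description precedes it below -/
import Mathlib

section
/- Let E be a real inner product space, 0 < m < L, and let f : E → ℝ be differentiable, m-strongly convex with L-Lipschitz gradient. Let x⋆ ∈ E satisfy ∇f(x⋆) = 0. Define V(x) := (L − m)( f(x) − f(x⋆) − (m/2)‖x − x⋆‖² ) − (1/2)‖∇f(x) − m(x − x⋆)‖². Then V(x⋆) = 0 and V(x) ≥ 0 for all x ∈ E. -/
open scoped RealInnerProductSpace

/-- `g` is the gradient of `f` at `x` (stated via the Fréchet derivative and the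
canonical map into the dual, so that no completeness assumption is needed). -/
def HasGradAt {E : Type*} [NormedAddCommGroup E] [InnerProductSpace ℝ E]
    (f : E → ℝ) (g : E) (x : E) : Prop :=
  HasFDerivAt f ((InnerProductSpace.toDualMap ℝ E) g : E →L[ℝ] ℝ) x

section StorageAux

variable {E : Type*} [NormedAddCommGroup E] [InnerProductSpace ℝ E]

/-- Derivative of a function along a line, expressed via its gradient. -/
lemma StorageAux.hasDerivAt_line {f : E → ℝ} {g : E → E} (hg : ∀ z, HasGradAt f (g z) z)
    (a v : E) (t : ℝ) :
    HasDerivAt (fun s : ℝ => f (a + s • v)) ⟪g (a + t • v), v⟫ t := by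
  have h1 : HasDerivAt (fun s : ℝ => a + s • v) v t := by
    simpa using ((hasDerivAt_id t).smul_const v).const_add a
  have h3 := hg (a + t • v)
  rw [HasGradAt] at h3
  have h2 := h3.comp_hasDerivAt t h1
  simpa [InnerProductSpace.toDualMap_apply_apply] using (show HasDerivAt (fun s : ℝ => f (a + s • v)) _ t from h2)

/-- The gradient of `x ↦ f x - m/2 ‖x - xs‖²`. -/
lemma StorageAux.hasGradAt_quad (m : ℝ) (xs : E) {f : E → ℝ} {f' : E → E}
    (hgrad : ∀ x, HasGradAt f (f' x) x) (z : E) :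
    HasGradAt (fun x => f x - m / 2 * ‖x - xs‖ ^ 2) (f' z - m • (z - xs)) z := by
  have heq : (fun x : E => f x - m / 2 * ‖x - xs‖ ^ 2)
      = fun x : E => f x - m / 2 * ⟪x - xs, x - xs⟫ := by
    funext x; rw [real_inner_self_eq_norm_sq]
  have h0 : HasFDerivAt (fun x : E => x - xs) (ContinuousLinearMap.id ℝ E) z :=
    (hasFDerivAt_id z).sub_const xs
  have h1 := h0.inner ℝ h0
  have h2 := (hgrad z).sub (h1.const_mul (m / 2))
  rw [HasGradAt, heq]
  convert h2 using 1
  · rfl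
  · rfl
  · rfl
  ext v
  simp [InnerProductSpace.toDualMap_apply_apply, fderivInnerCLM_apply, inner_sub_left,
    inner_sub_right, inner_smul_left, real_inner_comm xs v, real_inner_comm z v]
  ring

/-- Descent lemma from a one-sided Lipschitz-type bound on the gradient. -/
lemma StorageAux.descent {φ : E → ℝ} {g : E → E} {K : ℝ}
    (hg : ∀ z, HasGradAt φ (g z) z)
    (hmono : ∀ u v, ⟪g u - g v, u - v⟫ ≤ K * ‖u - v‖ ^ 2) (a b : E) :
    φ b ≤ φ a + ⟪g a, b - a⟫ + K / 2 * ‖b - a‖ ^ 2 := by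
  set v := b - a with hv
  set F : ℝ → ℝ := fun t => φ (a + t • v) - t * ⟪g a, v⟫ - K / 2 * t ^ 2 * ‖v‖ ^ 2 with hF
  have hder : ∀ t : ℝ, HasDerivAt F
      (⟪g (a + t • v), v⟫ - ⟪g a, v⟫ - K * t * ‖v‖ ^ 2) t := by
    intro t
    have h1 := StorageAux.hasDerivAt_line hg a v t
    have h2 : HasDerivAt (fun t : ℝ => t * ⟪g a, v⟫) ⟪g a, v⟫ t := by
      simpa using (hasDerivAt_id t).mul_const ⟪g a, v⟫
    have h3 : HasDerivAt (fun t : ℝ => K / 2 * t ^ 2 * ‖v‖ ^ 2) (K * t * ‖v‖ ^ 2) t := by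
      have := ((hasDerivAt_pow 2 t).const_mul (K / 2)).mul_const (‖v‖ ^ 2)
      convert this using 1
      · rfl
      · rfl
      ring
    exact (h1.sub h2).sub h3
  have hanti : AntitoneOn F (Set.Icc 0 1) := by
    apply antitoneOn_of_deriv_nonpos (convex_Icc 0 1)
    · exact fun t _ => ((hder t).continuousAt).continuousWithinAt
    · exact fun t _ => ((hder t).differentiableAt).differentiableWithinAt
    · intro t ht
      rw [interior_Icc] at ht
      rw [(hder t).deriv]
      have hmono' := hmono (a + t • v) a
      have hsub : a + t • v - a = t • v := by abel
      rw [hsub] at hmono'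
      rw [inner_smul_right, norm_smul] at hmono'
      have ht0 : 0 < t := ht.1
      have habs : |t| = t := abs_of_pos ht0
      rw [Real.norm_eq_abs, habs] at hmono'
      have hkey : ⟪g (a + t • v) - g a, v⟫ ≤ K * t * ‖v‖ ^ 2 := by
        have := (mul_le_mul_iff_right₀ ht0).mp
          (by nlinarith [hmono'] : t * ⟪g (a + t • v) - g a, v⟫ ≤ t * (K * t * ‖v‖ ^ 2))
        linarith
      rw [inner_sub_left] at hkey
      linarith
  have h01 : F 1 ≤ F 0 := hanti (by norm_num) (by norm_num) (by norm_num)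
  have hF0 : F 0 = φ a := by simp [hF]
  have hF1 : F 1 = φ b - ⟪g a, v⟫ - K / 2 * ‖v‖ ^ 2 := by
    have h1 : a + v = b := by rw [hv]; abel
    simp [hF, h1]
  rw [hF0, hF1] at h01
  linarith

/-- A critical point of a convex differentiable function is a global minimizer. -/
lemma StorageAux.min_of_grad_zero {φ : E → ℝ} {g : E → E} (hg : ∀ z, HasGradAt φ (g z) z)
    (hconv : ConvexOn ℝ Set.univ φ) (xs : E) (h0 : g xs = 0) (y : E) : φ xs ≤ φ y := by
  set v := y - xs with hv
  set ψ : ℝ → ℝ := fun t => φ (xs + t • v) with hψ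
  have hψconv : ConvexOn ℝ Set.univ ψ := by
    have h := hconv.comp_affineMap (AffineMap.lineMap (xs : E) y : ℝ →ᵃ[ℝ] E)
    have heq : (φ ∘ (AffineMap.lineMap (xs : E) y : ℝ →ᵃ[ℝ] E)) = ψ := by
      funext t
      simp only [hψ, Function.comp_apply, AffineMap.lineMap_apply, hv,
        vsub_eq_sub, vadd_eq_add]
      congr 1
      abel
    have hset : ((AffineMap.lineMap (xs : E) y : ℝ →ᵃ[ℝ] E)) ⁻¹' Set.univ = Set.univ :=
      Set.preimage_univ
    rw [heq, hset] at h
    exact h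
  have hder : HasDerivAt ψ 0 0 := by
    have := StorageAux.hasDerivAt_line hg xs v 0
    simpa [h0] using this
  have hle := hψconv.le_slope_of_hasDerivAt (Set.mem_univ (0:ℝ)) (Set.mem_univ (1:ℝ))
    (by norm_num) hder
  rw [slope_def_field] at hle
  have h1 : xs + (1:ℝ) • v = y := by rw [one_smul, hv]; abel
  have h0' : xs + (0:ℝ) • v = xs := by simp
  simp only [hψ, h1, h0'] at hle
  linarith

end StorageAux

/-- The storage-type function `V` vanishes at the minimizer and is nonnegative. -/
theorem storage_nonneg {E : Type*} [NormedAddCommGroup E] [InnerProductSpace ℝ E]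
    (m L : ℝ) (hm : 0 < m) (hmL : m < L)
    (f : E → ℝ) (f' : E → E)
    (hgrad : ∀ x, HasGradAt f (f' x) x)
    (hsc : ConvexOn ℝ Set.univ (fun x => f x - m / 2 * ‖x‖ ^ 2))
    (hlip : ∀ x y, ‖f' x - f' y‖ ≤ L * ‖x - y‖)
    (xstar : E) (hstar : f' xstar = 0)
    (V : E → ℝ)
    (hV : ∀ x, V x = (L - m) * (f x - f xstar - m / 2 * ‖x - xstar‖ ^ 2)
        - 1 / 2 * ‖f' x - m • (x - xstar)‖ ^ 2) :
    V xstar = 0 ∧ ∀ x, 0 ≤ V x := by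
  set K := L - m with hK
  have hKpos : 0 < K := sub_pos.mpr hmL
  have hKne : K ≠ 0 := ne_of_gt hKpos
  set g : E → E := fun z => f' z - m • (z - xstar) with hgdef
  set φ : E → ℝ := fun x => f x - m / 2 * ‖x - xstar‖ ^ 2 with hφ
  have hgφ : ∀ z, HasGradAt φ (g z) z := fun z => StorageAux.hasGradAt_quad m xstar hgrad z
  have hgxs : g xstar = 0 := by simp [hgdef, hstar]
  have hmono : ∀ u v, ⟪g u - g v, u - v⟫ ≤ K * ‖u - v‖ ^ 2 := by
    intro u v
    have h1 : ⟪f' u - f' v, u - v⟫ ≤ L * ‖u - v‖ ^ 2 :=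
      calc ⟪f' u - f' v, u - v⟫ ≤ ‖f' u - f' v‖ * ‖u - v‖ := real_inner_le_norm _ _
        _ ≤ L * ‖u - v‖ * ‖u - v‖ :=
          mul_le_mul_of_nonneg_right (hlip u v) (norm_nonneg _)
        _ = L * ‖u - v‖ ^ 2 := by ring
    have h2 : g u - g v = (f' u - f' v) - m • (u - v) := by
      simp only [hgdef, smul_sub]
      abel
    rw [h2, inner_sub_left, inner_smul_left, RCLike.conj_to_real,
      real_inner_self_eq_norm_sq]
    rw [hK]
    linarith
  have hφconv : ConvexOn ℝ Set.univ φ := by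
    have heq : φ = (fun x => f x - m / 2 * ‖x‖ ^ 2)
        + fun x => m * ⟪xstar, x⟫ - m / 2 * ‖xstar‖ ^ 2 := by
      funext x
      have hexp : ‖x - xstar‖ ^ 2 = ‖x‖ ^ 2 - 2 * ⟪xstar, x⟫ + ‖xstar‖ ^ 2 := by
        rw [← real_inner_self_eq_norm_sq, ← real_inner_self_eq_norm_sq,
          ← real_inner_self_eq_norm_sq]
        simp only [inner_sub_left, inner_sub_right]
        rw [real_inner_comm x xstar]
        ring
      simp only [hφ, Pi.add_apply, hexp]
      ring
    rw [heq]
    refine hsc.add ⟨convex_univ, ?_⟩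
    intro x _ y _ a b ha hb hab
    simp only [smul_eq_mul, inner_add_right, inner_smul_right]
    have hb' : b = 1 - a := by linarith
    rw [hb']
    apply le_of_eq
    ring
  have hmin : ∀ y, φ xstar ≤ φ y := StorageAux.min_of_grad_zero hgφ hφconv xstar hgxs
  have key : ∀ x, 1 / 2 * ‖g x‖ ^ 2 ≤ K * (φ x - φ xstar) := by
    intro x
    have hd := StorageAux.descent hgφ hmono x (x - K⁻¹ • g x)
    have h1 : x - K⁻¹ • g x - x = -(K⁻¹ • g x) := by abel
    rw [h1, inner_neg_right, inner_smul_right, real_inner_self_eq_norm_sq,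
      norm_neg, norm_smul, Real.norm_eq_abs, abs_of_pos (by positivity : (0:ℝ) < K⁻¹)] at hd
    have hmn := hmin (x - K⁻¹ • g x)
    have hsq : K / 2 * (K⁻¹ * ‖g x‖) ^ 2 = K⁻¹ / 2 * ‖g x‖ ^ 2 := by
      field_simp
    rw [hsq] at hd
    have hstep : K⁻¹ / 2 * ‖g x‖ ^ 2 ≤ φ x - φ xstar := by linarith
    have := mul_le_mul_of_nonneg_left hstep hKpos.le
    have hc : K * (K⁻¹ / 2 * ‖g x‖ ^ 2) = 1 / 2 * ‖g x‖ ^ 2 := by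
      field_simp
    linarith [hc ▸ this]
  constructor
  · rw [hV xstar]
    simp [hstar]
  · intro x
    rw [hV x]
    have h1 : f x - f xstar - m / 2 * ‖x - xstar‖ ^ 2 = φ x - φ xstar := by
      simp only [hφ]
      simp
      ring
    have hkx := key x
    have hgx : g x = f' x - m • (x - xstar) := rfl
    rw [hgx] at hkx
    rw [h1]
    linarith
end

section
/- Let E be a real inner product space, 0 < m < L, and let f : E → ℝ be differentiable, m-strongly convex with L-Lipschitz gradient. Fix any reference point x⋆ ∈ E and define V(x) := (L − m)( f(x) − f(x⋆) − (m/2)‖x − x⋆‖² ) − (1/2)‖∇f(x) − m(x − x⋆)‖². Then for all x, y ∈ E: V(x) − V(y) ≤ ⟨ ∇f(x) − m(x − x⋆), L(x − x⋆) − ∇f(x) − ( L(y − x⋆) − ∇f(y) ) ⟩. -/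
open scoped RealInnerProductSpace

section Helpers

variable {E : Type*} [NormedAddCommGroup E] [InnerProductSpace ℝ E]

lemma line_hasDerivAt (f : E → ℝ) (f' : E → E) (hgrad : ∀ z, HasGradAt f (f' z) z)
    (x v : E) (t : ℝ) :
    HasDerivAt (fun s : ℝ => f (x + s • v)) ⟪f' (x + t • v), v⟫ t := by
  have hline : HasDerivAt (fun s : ℝ => x + s • v) v t := by
    simpa using ((hasDerivAt_id t).smul_const v).const_add x
  have h0 := hgrad (x + t • v)
  unfold HasGradAt at h0
  have h := h0.comp_hasDerivAt t hline
  simpa [InnerProductSpace.toDualMap_apply_apply, Function.comp_def] using h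

lemma normsq_line (x v : E) (s : ℝ) :
    ‖x + s • v‖ ^ 2 = ‖x‖ ^ 2 + 2 * (s * ⟪x, v⟫) + s ^ 2 * ‖v‖ ^ 2 := by
  rw [norm_add_sq_real, real_inner_smul_right, norm_smul]
  simp [mul_pow, sq_abs]

lemma normsq_line_hasDerivAt (x v : E) (t : ℝ) :
    HasDerivAt (fun s : ℝ => ‖x + s • v‖ ^ 2) (2 * ⟪x, v⟫ + 2 * t * ‖v‖ ^ 2) t := by
  have ha : HasDerivAt (fun s : ℝ => s * ⟪x, v⟫) ⟪x, v⟫ t := by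
    simpa using (hasDerivAt_id t).mul_const ⟪x, v⟫
  have hb : HasDerivAt (fun s : ℝ => s ^ 2 * ‖v‖ ^ 2) (2 * t * ‖v‖ ^ 2) t := by
    have h := (hasDerivAt_pow 2 t).mul_const (‖v‖ ^ 2)
    refine h.congr_deriv ?_
    norm_num
  have h := ((ha.const_mul 2).const_add (‖x‖ ^ 2)).add hb
  exact h.congr_of_eventuallyEq (Filter.Eventually.of_forall fun s => normsq_line x v s)

/-- Lower bound from strong convexity. -/
lemma strong_lower (m : ℝ) (f : E → ℝ) (f' : E → E)
    (hgrad : ∀ z, HasGradAt f (f' z) z)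
    (hsc : ConvexOn ℝ Set.univ (fun x => f x - m / 2 * ‖x‖ ^ 2))
    (x y : E) :
    f x + ⟪f' x, y - x⟫ + m / 2 * ‖y - x‖ ^ 2 ≤ f y := by
  set v := y - x with hv
  have hconv : ConvexOn ℝ Set.univ
      (fun s : ℝ => f (x + s • v) - m / 2 * ‖x + s • v‖ ^ 2) := by
    have h := hsc.comp_affineMap (AffineMap.lineMap x (x + v))
    have he : ((fun z => f z - m / 2 * ‖z‖ ^ 2) ∘ (AffineMap.lineMap x (x + v) : ℝ →ᵃ[ℝ] E))
        = fun s : ℝ => f (x + s • v) - m / 2 * ‖x + s • v‖ ^ 2 := by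
      funext s
      simp [Function.comp, AffineMap.lineMap_apply, add_sub_cancel_left, add_comm]
    rwa [Set.preimage_univ, he] at h
  have hd : HasDerivAt (fun s : ℝ => f (x + s • v) - m / 2 * ‖x + s • v‖ ^ 2)
      (⟪f' x, v⟫ - m * ⟪x, v⟫) 0 := by
    have h1 := line_hasDerivAt f f' hgrad x v 0
    have h2 := (normsq_line_hasDerivAt x v 0).const_mul (m / 2)
    have h := h1.sub h2
    simp only [zero_smul, add_zero] at h1 h2 h ⊢
    refine h.congr_deriv ?_
    ring
  have hslope := hconv.le_slope_of_hasDerivAt (Set.mem_univ (0:ℝ)) (Set.mem_univ 1)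
    zero_lt_one hd
  have h0 : x + (0:ℝ) • v = x := by simp
  have h1 : x + (1:ℝ) • v = y := by simp [hv]
  rw [slope_def_field] at hslope
  simp only [h0, h1] at hslope
  have hdiv : (f y - m / 2 * ‖y‖ ^ 2 - (f x - m / 2 * ‖x‖ ^ 2)) / (1 - 0)
      = f y - m / 2 * ‖y‖ ^ 2 - (f x - m / 2 * ‖x‖ ^ 2) := by norm_num
  rw [hdiv] at hslope
  have hy2 : m / 2 * ‖y‖ ^ 2
      = m / 2 * ‖x‖ ^ 2 + m * ⟪x, v⟫ + m / 2 * ‖v‖ ^ 2 := by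
    have hyx : y = x + v := by simp [hv]
    rw [hyx, norm_add_sq_real]
    ring
  linarith [hslope, hy2]

/-- Descent lemma from Lipschitz gradient. -/
lemma descent_lemma (C : ℝ) (hC : 0 ≤ C) (f : E → ℝ) (f' : E → E)
    (hgrad : ∀ z, HasGradAt f (f' z) z)
    (hlip : ∀ a b, ‖f' a - f' b‖ ≤ C * ‖a - b‖)
    (x y : E) :
    f y ≤ f x + ⟪f' x, y - x⟫ + C / 2 * ‖y - x‖ ^ 2 := by
  set v := y - x with hv
  have hd : ∀ t : ℝ, HasDerivAt
      (fun s : ℝ => f (x + s • v) - s * ⟪f' x, v⟫ - C / 2 * (s ^ 2 * ‖v‖ ^ 2))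
      (⟪f' (x + t • v), v⟫ - ⟪f' x, v⟫ - C * t * ‖v‖ ^ 2) t := by
    intro t
    have h1 := line_hasDerivAt f f' hgrad x v t
    have h2 : HasDerivAt (fun s : ℝ => s * ⟪f' x, v⟫) ⟪f' x, v⟫ t := by
      simpa using (hasDerivAt_id t).mul_const ⟪f' x, v⟫
    have h3 : HasDerivAt (fun s : ℝ => C / 2 * (s ^ 2 * ‖v‖ ^ 2)) (C * t * ‖v‖ ^ 2) t := by
      have h := ((hasDerivAt_pow 2 t).mul_const (‖v‖ ^ 2)).const_mul (C / 2)
      refine h.congr_deriv ?_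
      norm_num
      ring
    exact (h1.sub h2).sub h3
  have hanti : AntitoneOn
      (fun s : ℝ => f (x + s • v) - s * ⟪f' x, v⟫ - C / 2 * (s ^ 2 * ‖v‖ ^ 2))
      (Set.Icc 0 1) := by
    apply antitoneOn_of_deriv_nonpos (convex_Icc 0 1)
    · exact fun t _ => ((hd t).differentiableAt.continuousAt.continuousWithinAt)
    · exact fun t _ => ((hd t).differentiableAt.differentiableWithinAt)
    · intro t ht
      rw [interior_Icc] at ht
      rw [(hd t).deriv]
      have hinner : ⟪f' (x + t • v), v⟫ - ⟪f' x, v⟫ = ⟪f' (x + t • v) - f' x, v⟫ := by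
        rw [inner_sub_left]
      have hb : ⟪f' (x + t • v) - f' x, v⟫ ≤ ‖f' (x + t • v) - f' x‖ * ‖v‖ :=
        real_inner_le_norm _ _
      have hl : ‖f' (x + t • v) - f' x‖ ≤ C * (t * ‖v‖) := by
        have h := hlip (x + t • v) x
        simpa [norm_smul, abs_of_pos ht.1, mul_assoc] using h
      have hv0 : (0:ℝ) ≤ ‖v‖ := norm_nonneg v
      have hbound : ⟪f' (x + t • v) - f' x, v⟫ ≤ C * t * ‖v‖ ^ 2 := by
        calc ⟪f' (x + t • v) - f' x, v⟫ ≤ ‖f' (x + t • v) - f' x‖ * ‖v‖ := hb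
        _ ≤ C * (t * ‖v‖) * ‖v‖ := by
            apply mul_le_mul_of_nonneg_right hl hv0
        _ = C * t * ‖v‖ ^ 2 := by ring
      linarith [hinner, hbound]
  have h01 := hanti (Set.mem_Icc.mpr ⟨le_refl 0, zero_le_one⟩)
    (Set.mem_Icc.mpr ⟨zero_le_one, le_refl 1⟩) zero_le_one
  norm_num at h01
  have h1 : x + v = y := by simp [hv]
  rw [h1] at h01
  linarith [h01]

/-- Cocoercivity-type inequality from convexity lower bound + descent. -/
lemma coco (M : ℝ) (hM : 0 < M) (h : E → ℝ) (g : E → E)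
    (hlow : ∀ a b, h a + ⟪g a, b - a⟫ ≤ h b)
    (hdesc : ∀ a b, h b ≤ h a + ⟪g a, b - a⟫ + M / 2 * ‖b - a‖ ^ 2)
    (x y : E) :
    M * h x - M * ⟪g x, x - y⟫ + 1 / 2 * ‖g y - g x‖ ^ 2 ≤ M * h y := by
  set w : E := g y - g x with hw
  set z : E := y - M⁻¹ • w with hz
  have k1 := hlow x z
  have k2 := hdesc y z
  have hzy : z - y = -(M⁻¹ • w) := by rw [hz]; abel
  have hzx : z - x = -(x - y) - M⁻¹ • w := by rw [hz]; abel
  have e1 : ⟪g y, z - y⟫ = -(M⁻¹ * ⟪g y, w⟫) := by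
    rw [hzy, inner_neg_right, real_inner_smul_right]
  have e2 : ‖z - y‖ ^ 2 = M⁻¹ ^ 2 * ‖w‖ ^ 2 := by
    rw [hzy, norm_neg, norm_smul, mul_pow, Real.norm_eq_abs, sq_abs]
  have e3 : ⟪g x, z - x⟫ = -⟪g x, x - y⟫ - M⁻¹ * ⟪g x, w⟫ := by
    rw [hzx, inner_sub_right, inner_neg_right, real_inner_smul_right]
  have e4 : ⟪g y, w⟫ - ⟪g x, w⟫ = ‖w‖ ^ 2 := by
    rw [← inner_sub_left, ← hw, real_inner_self_eq_norm_sq]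
  have comb : h x - ⟪g x, x - y⟫ - M⁻¹ * ⟪g x, w⟫
      ≤ h y - M⁻¹ * ⟪g y, w⟫ + M / 2 * ‖z - y‖ ^ 2 := by
    linarith [k1, k2, e1, e3]
  have comb' := mul_le_mul_of_nonneg_left comb hM.le
  have c1 : M * (M⁻¹ * ⟪g x, w⟫) = ⟪g x, w⟫ := by
    field_simp
  have c2 : M * (M⁻¹ * ⟪g y, w⟫) = ⟪g y, w⟫ := by
    field_simp
  have c3 : M * (M / 2 * ‖z - y‖ ^ 2) = 1 / 2 * ‖w‖ ^ 2 := by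
    rw [e2]
    field_simp
  nlinarith [comb', c1, c2, c3, e4]

end Helpers

/-- Increment (subgradient-type) inequality for the storage function `V`. -/
theorem storage_increment {E : Type*} [NormedAddCommGroup E] [InnerProductSpace ℝ E]
    (m L : ℝ) (hm : 0 < m) (hmL : m < L)
    (f : E → ℝ) (f' : E → E)
    (hgrad : ∀ x, HasGradAt f (f' x) x)
    (hsc : ConvexOn ℝ Set.univ (fun x => f x - m / 2 * ‖x‖ ^ 2))
    (hlip : ∀ x y, ‖f' x - f' y‖ ≤ L * ‖x - y‖)
    (xstar : E)
    (V : E → ℝ)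
    (hV : ∀ x, V x = (L - m) * (f x - f xstar - m / 2 * ‖x - xstar‖ ^ 2)
        - 1 / 2 * ‖f' x - m • (x - xstar)‖ ^ 2) :
    ∀ x y : E,
      V x - V y ≤ ⟪f' x - m • (x - xstar),
        L • (x - xstar) - f' x - (L • (y - xstar) - f' y)⟫ := by
  intro x y
  have hM0 : (0:ℝ) < L - m := by linarith
  have hL0 : (0:ℝ) ≤ L := by linarith
  have lower := strong_lower m f f' hgrad hsc
  have upper := descent_lemma L hL0 f f' hgrad hlip
  have hexp : ∀ a b : E, m / 2 * ‖b - xstar‖ ^ 2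
      = m / 2 * ‖a - xstar‖ ^ 2 + m * ⟪a - xstar, b - a⟫ + m / 2 * ‖b - a‖ ^ 2 := by
    intro a b
    have hab : b - xstar = (a - xstar) + (b - a) := by abel
    rw [hab, norm_add_sq_real]
    ring
  have h3 : ∀ a b : E, ⟪f' a - m • (a - xstar), b - a⟫
      = ⟪f' a, b - a⟫ - m * ⟪a - xstar, b - a⟫ := by
    intro a b
    rw [inner_sub_left, real_inner_smul_left]
  have hlow : ∀ a b : E, (fun z => f z - m / 2 * ‖z - xstar‖ ^ 2) a
      + ⟪(fun z => f' z - m • (z - xstar)) a, b - a⟫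
      ≤ (fun z => f z - m / 2 * ‖z - xstar‖ ^ 2) b := by
    intro a b
    simp only
    linarith [lower a b, hexp a b, h3 a b]
  have hdesc : ∀ a b : E, (fun z => f z - m / 2 * ‖z - xstar‖ ^ 2) b
      ≤ (fun z => f z - m / 2 * ‖z - xstar‖ ^ 2) a
      + ⟪(fun z => f' z - m • (z - xstar)) a, b - a⟫
      + (L - m) / 2 * ‖b - a‖ ^ 2 := by
    intro a b
    simp only
    linarith [upper a b, hexp a b, h3 a b]
  have key := coco (L - m) hM0 (fun z => f z - m / 2 * ‖z - xstar‖ ^ 2)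
    (fun z => f' z - m • (z - xstar)) hlow hdesc x y
  have hrhs : L • (x - xstar) - f' x - (L • (y - xstar) - f' y)
      = (L - m) • (x - y) + (f' y - m • (y - xstar) - (f' x - m • (x - xstar))) := by
    module
  rw [hrhs, hV x, hV y]
  have e5 : ⟪f' x - m • (x - xstar),
      (L - m) • (x - y) + (f' y - m • (y - xstar) - (f' x - m • (x - xstar)))⟫
      = (L - m) * ⟪f' x - m • (x - xstar), x - y⟫
        + ⟪f' x - m • (x - xstar), f' y - m • (y - xstar) - (f' x - m • (x - xstar))⟫ := by
    rw [inner_add_right, real_inner_smul_right]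
  have e7 : ‖f' y - m • (y - xstar) - (f' x - m • (x - xstar))‖ ^ 2
      = ‖f' y - m • (y - xstar)‖ ^ 2
        - 2 * ⟪f' x - m • (x - xstar), f' y - m • (y - xstar)⟫
        + ‖f' x - m • (x - xstar)‖ ^ 2 := by
    rw [norm_sub_sq_real, real_inner_comm]
  have e8 : ⟪f' x - m • (x - xstar), f' y - m • (y - xstar) - (f' x - m • (x - xstar))⟫
      = ⟪f' x - m • (x - xstar), f' y - m • (y - xstar)⟫
        - ‖f' x - m • (x - xstar)‖ ^ 2 := by
    rw [inner_sub_right, real_inner_self_eq_norm_sq]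
  rw [e5, e8]
  linarith [key, e7]
end

section
/- Let d ≥ 1 and ρ ∈ (0,1). For each k ∈ ℕ let f_k : ℝ^d → ℝ be differentiable, m_k-strongly convex with L_k-Lipschitz gradient, where 0 < m_k < L_k, and let x⋆_k ∈ ℝ^d satisfy ∇f_k(x⋆_k) = 0. Let (x_k) be any sequence in ℝ^d. Define x̃_k := x_k − x⋆_k, ∇_k := ∇f_k(x_k), Δx⋆_k := x⋆_k − x⋆_{k+1}, Δ_k := ∇f_k(x_k) − ∇f_{k+1}(x_k), a_k := sqrt( m_k (L_k − m_k) / 2 ), and f̂_k(x) := f_k(x) − f_k(x⋆_k). Define S_0 := ⟨ L_0 x̃_0 − ∇_0, ∇_0 − m_0 x̃_0 ⟩ and, for k ≥ 1, S_k := ⟨ L_k x̃_k − ∇_k − ρ² L_k ( x̃_{k−1} + Δx⋆_{k−1} ) + ρ² ( ∇_{k−1} − Δ_{k−1} ), ∇_k − m_k x̃_k ⟩ + ρ² a_{k−1}² ‖x̃_{k−1}‖² − ρ² a_k² ‖x̃_{k−1} + Δx⋆_{k−1}‖² + (ρ²/2) ‖∇_{k−1} − m_{k−1} x̃_{k−1}‖²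 − (ρ²/2) ‖∇_{k−1} − Δ_{k−1} − m_k ( x̃_{k−1} + Δx⋆_{k−1} )‖². Then for every N ≥ 1: Σ_{k=0}^{N} ρ^{−2k} S_k ≥ Σ_{k=1}^{N} ρ^{−2(k−1)} [ (L_{k−1} − m_{k−1}) f̂_{k−1}(x_{k−1}) − (L_k − m_k) f̂_k(x_{k−1}) ]. -/
open scoped RealInnerProductSpace

set_option linter.unusedSectionVars false
set_option linter.unusedVariables false
set_option maxHeartbeats 1000000

section Aux

variable {F : Type*} [NormedAddCommGroup F] [InnerProductSpace ℝ F] [CompleteSpace F]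

private lemma line_deriv' {f : F → ℝ} {gr : F → F} (hg : ∀ p, HasGradientAt f (gr p) p)
    (z v : F) (t : ℝ) :
    HasDerivAt (fun s : ℝ => f (z + s • v)) ⟪gr (z + t • v), v⟫ t := by
  have h1 : HasDerivAt (fun s : ℝ => z + s • v) v t := by
    simpa using ((hasDerivAt_id t).smul_const v).const_add z
  have h2 := (hg (z + t • v)).hasFDerivAt
  have h3 := h2.comp_hasDerivAt t h1
  simp at h3
  exact h3

private lemma descent_lemma' {f : F → ℝ} {gr : F → F} (hg : ∀ p, HasGradientAt f (gr p) p)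
    {L : ℝ} (hlip : ∀ p q, ‖gr p - gr q‖ ≤ L * ‖p - q‖) (z y : F) :
    f y ≤ f z + ⟪gr z, y - z⟫ + L / 2 * ‖y - z‖ ^ 2 := by
  set v := y - z with hv
  set φ : ℝ → ℝ := fun t => f (z + t • v) - t * ⟪gr z, v⟫ - L / 2 * t ^ 2 * ‖v‖ ^ 2 with hφ
  have hder : ∀ t : ℝ, HasDerivAt φ
      (⟪gr (z + t • v), v⟫ - ⟪gr z, v⟫ - L * t * ‖v‖ ^ 2) t := by
    intro t
    have h1 := line_deriv' hg z v t
    have h2 : HasDerivAt (fun t : ℝ => t * ⟪gr z, v⟫) ⟪gr z, v⟫ t := by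
      simpa using (hasDerivAt_id t).mul_const ⟪gr z, v⟫
    have h3 : HasDerivAt (fun t : ℝ => L / 2 * t ^ 2 * ‖v‖ ^ 2) (L * t * ‖v‖ ^ 2) t := by
      have h4 : HasDerivAt (fun t : ℝ => t ^ 2) (2 * t) t := by
        simpa using hasDerivAt_pow 2 t
      have := (h4.const_mul (L / 2)).mul_const (‖v‖ ^ 2)
      exact this.congr_deriv (by ring)
    exact (h1.sub h2).sub h3
  have hmono : AntitoneOn φ (Set.Icc 0 1) := by
    apply antitoneOn_of_deriv_nonpos (convex_Icc 0 1)
    · exact fun t _ => ((hder t).continuousAt).continuousWithinAt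
    · exact fun t _ => (hder t).differentiableAt.differentiableWithinAt
    · intro t ht
      rw [interior_Icc] at ht
      rw [(hder t).deriv]
      have h4 : ⟪gr (z + t • v) - gr z, v⟫ ≤ L * t * ‖v‖ ^ 2 := by
        calc ⟪gr (z + t • v) - gr z, v⟫ ≤ ‖gr (z + t • v) - gr z‖ * ‖v‖ :=
              real_inner_le_norm _ _
          _ ≤ (L * ‖(z + t • v) - z‖) * ‖v‖ := by
              gcongr; exact hlip _ _
          _ = L * t * ‖v‖ ^ 2 := by
              simp [norm_smul, abs_of_pos ht.1]; ring
      rw [inner_sub_left] at h4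
      linarith
  have := hmono (Set.left_mem_Icc.2 one_pos.le) (Set.right_mem_Icc.2 one_pos.le) one_pos.le
  have hz : z + v = y := by rw [hv]; abel
  simp only [hφ, one_smul, zero_smul, add_zero, hz] at this
  nlinarith [this]

private lemma convex_lower' {h : F → ℝ} (hconv : ConvexOn ℝ Set.univ h)
    {z y : F} {c : ℝ} (hd : HasDerivAt (fun t : ℝ => h (z + t • (y - z))) c 0) :
    h z + c ≤ h y := by
  have hslope := hasDerivAt_iff_tendsto_slope.1 hd
  have hle : ∀ᶠ t in nhdsWithin (0:ℝ) (Set.Ioi 0),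
      slope (fun t : ℝ => h (z + t • (y - z))) 0 t ≤ h y - h z := by
    filter_upwards [Ioo_mem_nhdsGT_of_mem (by norm_num : (0:ℝ) ∈ Set.Ico 0 1)] with t ht
    have h1 : h (z + t • (y - z)) ≤ (1 - t) * h z + t * h y := by
      have := hconv.2 (Set.mem_univ z) (Set.mem_univ y)
        (by linarith [ht.2] : (0:ℝ) ≤ 1 - t) (le_of_lt ht.1) (by ring)
      have heq : (1 - t) • z + t • y = z + t • (y - z) := by
        rw [smul_sub, sub_smul]; module
      rw [heq] at this
      simpa using this
    rw [slope_def_field]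
    simp only [zero_smul, add_zero, sub_zero]
    rw [div_le_iff₀ ht.1]
    nlinarith [ht.1, h1]
  have htend : Filter.Tendsto (slope (fun t : ℝ => h (z + t • (y - z))) 0)
      (nhdsWithin (0:ℝ) (Set.Ioi 0)) (nhds c) :=
    hslope.mono_left (nhdsWithin_mono 0 (fun t ht => ne_of_gt ht))
  have := le_of_tendsto htend hle
  linarith

private lemma descent_g' {f : F → ℝ} {f' : F → F} {m L : ℝ} (xs : F)
    (hg : ∀ p, HasGradientAt f (f' p) p)
    (hlip : ∀ p q, ‖f' p - f' q‖ ≤ L * ‖p - q‖) (z y : F) :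
    (f y - m / 2 * ‖y - xs‖ ^ 2) ≤ (f z - m / 2 * ‖z - xs‖ ^ 2)
      + ⟪f' z - m • (z - xs), y - z⟫ + (L - m) / 2 * ‖y - z‖ ^ 2 := by
  have hd := descent_lemma' hg hlip z y
  have hnorm : ‖y - xs‖ ^ 2 = ‖z - xs‖ ^ 2 + 2 * ⟪z - xs, y - z⟫ + ‖y - z‖ ^ 2 := by
    have h5 : y - xs = (z - xs) + (y - z) := by abel
    rw [h5, norm_add_sq_real]
  have hinner : ⟪f' z - m • (z - xs), y - z⟫
      = ⟪f' z, y - z⟫ - m * ⟪z - xs, y - z⟫ := by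
    rw [inner_sub_left, real_inner_smul_left]
  rw [hinner, hnorm]
  ring_nf
  ring_nf at hd
  linarith

private lemma lower_g' {f : F → ℝ} {f' : F → F} {m : ℝ} (xs : F)
    (hg : ∀ p, HasGradientAt f (f' p) p)
    (hsc : ConvexOn ℝ Set.univ (fun x => f x - m / 2 * ‖x‖ ^ 2)) (z y : F) :
    (f z - m / 2 * ‖z - xs‖ ^ 2) + ⟪f' z - m • (z - xs), y - z⟫
      ≤ (f y - m / 2 * ‖y - xs‖ ^ 2) := by
  set v := y - z with hv
  have hq : (fun t : ℝ => m / 2 * ‖z + t • v‖ ^ 2)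
      = fun t : ℝ => m / 2 * ‖z‖ ^ 2 + t * (m * ⟪z, v⟫) + t ^ 2 * (m / 2 * ‖v‖ ^ 2) := by
    funext t
    rw [norm_add_sq_real, real_inner_smul_right, norm_smul]
    simp only [mul_pow, sq_abs, Real.norm_eq_abs]
    ring
  have hd2 : HasDerivAt (fun t : ℝ => m / 2 * ‖z + t • v‖ ^ 2) (m * ⟪z, v⟫) 0 := by
    rw [hq]
    have h1 : HasDerivAt (fun t : ℝ => t * (m * ⟪z, v⟫)) (m * ⟪z, v⟫) 0 := by
      simpa using (hasDerivAt_id (0:ℝ)).mul_const (m * ⟪z, v⟫)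
    have h2 : HasDerivAt (fun t : ℝ => t ^ 2 * (m / 2 * ‖v‖ ^ 2)) 0 0 := by
      have := (hasDerivAt_pow 2 (0:ℝ)).mul_const (m / 2 * ‖v‖ ^ 2)
      simpa using this
    exact (((hasDerivAt_const (0:ℝ) (m / 2 * ‖z‖ ^ 2)).add h1).add h2).congr_deriv (by ring)
  have hd1 := line_deriv' hg z v 0
  have hdh : HasDerivAt (fun t : ℝ => f (z + t • v) - m / 2 * ‖z + t • v‖ ^ 2)
      (⟪f' z, v⟫ - m * ⟪z, v⟫) 0 := by
    have h6 : z + (0:ℝ) • v = z := by simp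
    have := hd1.sub hd2
    rwa [h6] at this
  have hcl : (f z - m / 2 * ‖z‖ ^ 2) + (⟪f' z, v⟫ - m * ⟪z, v⟫)
      ≤ f y - m / 2 * ‖y‖ ^ 2 :=
    convex_lower' hsc (by rw [hv] at hdh ⊢; exact hdh)
  have hnz : ‖z - xs‖ ^ 2 = ‖z‖ ^ 2 - 2 * ⟪z, xs⟫ + ‖xs‖ ^ 2 := norm_sub_sq_real z xs
  have hny : ‖y - xs‖ ^ 2 = ‖y‖ ^ 2 - 2 * ⟪y, xs⟫ + ‖xs‖ ^ 2 := norm_sub_sq_real y xs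
  have hinner : ⟪f' z - m • (z - xs), y - z⟫
      = ⟪f' z, v⟫ - m * ⟪z, v⟫ + m * (⟪y, xs⟫ - ⟪z, xs⟫) := by
    rw [inner_sub_left, real_inner_smul_left, inner_sub_left, hv]
    have h7 : ⟪xs, y - z⟫ = ⟪y, xs⟫ - ⟪z, xs⟫ := by
      rw [inner_sub_right, real_inner_comm xs y, real_inner_comm xs z]
    rw [h7]; ring
  rw [hinner, hnz, hny]
  ring_nf
  ring_nf at hcl
  linarith

private lemma interp_g' {f : F → ℝ} {f' : F → F} {m L : ℝ} (xs : F)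
    (hmL : m < L)
    (hg : ∀ p, HasGradientAt f (f' p) p)
    (hsc : ConvexOn ℝ Set.univ (fun x => f x - m / 2 * ‖x‖ ^ 2))
    (hlip : ∀ p q, ‖f' p - f' q‖ ≤ L * ‖p - q‖)
    (z y : F) :
    (L - m) * (f z - m / 2 * ‖z - xs‖ ^ 2)
      + (L - m) * ⟪f' z - m • (z - xs), y - z⟫
      + 1 / 2 * ‖(f' y - m • (y - xs)) - (f' z - m • (z - xs))‖ ^ 2
      ≤ (L - m) * (f y - m / 2 * ‖y - xs‖ ^ 2) := by
  have hMpos : (0:ℝ) < L - m := sub_pos.2 hmL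
  set M := L - m with hM
  set w := y - (1 / M) • ((f' y - m • (y - xs)) - (f' z - m • (z - xs))) with hw
  have h1 := descent_g' (m := m) xs hg hlip y w
  have h2 := lower_g' xs hg hsc z w
  set Gy := f' y - m • (y - xs) with hGy
  set Gz := f' z - m • (z - xs) with hGz
  set D := Gy - Gz with hD
  rw [← hM] at h1
  have hwy : w - y = -((1 / M) • D) := by rw [hw]; abel
  have hiwy : ⟪Gy, w - y⟫ = -((1 / M) * ⟪Gy, D⟫) := by
    rw [hwy, inner_neg_right, real_inner_smul_right]
  have hnwy : ‖w - y‖ ^ 2 = (1 / M) ^ 2 * ‖D‖ ^ 2 := by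
    rw [hwy, norm_neg, norm_smul]
    simp [mul_pow, sq_abs]
  have hwz : w - z = (y - z) - (1 / M) • D := by rw [hw]; abel
  have hiwz : ⟪Gz, w - z⟫ = ⟪Gz, y - z⟫ - (1 / M) * ⟪Gz, D⟫ := by
    rw [hwz, inner_sub_right, real_inner_smul_right]
  have hDD : ⟪Gy, D⟫ = ⟪Gz, D⟫ + ‖D‖ ^ 2 := by
    have h8 : ⟪Gy - Gz, D⟫ = ‖D‖ ^ 2 := by rw [← hD, real_inner_self_eq_norm_sq]
    rw [inner_sub_left] at h8; linarith
  rw [hiwy, hnwy, hDD] at h1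
  rw [hiwz] at h2
  have hMne : M ≠ 0 := ne_of_gt hMpos
  have hc1 : M * (1 / M * ‖D‖ ^ 2) = ‖D‖ ^ 2 := by field_simp
  have hc2 : M * (M / 2 * (1 / M) ^ 2 * ‖D‖ ^ 2) = 1 / 2 * ‖D‖ ^ 2 := by
    field_simp
  have comb : (f z - m / 2 * ‖z - xs‖ ^ 2) + ⟪Gz, y - z⟫
      + 1 / M * ‖D‖ ^ 2 - M / 2 * (1 / M) ^ 2 * ‖D‖ ^ 2
      ≤ f y - m / 2 * ‖y - xs‖ ^ 2 := by linarith
  have hfin := mul_le_mul_of_nonneg_left comb hMpos.le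
  nlinarith [hfin, hc1, hc2]

private lemma telescope_aux (ρ : ℝ) (hρ0 : 0 < ρ) (S Qb D : ℕ → ℝ)
    (claim1 : Qb 0 ≤ S 0)
    (claim2 : ∀ n : ℕ, Qb (n+1) - ρ ^ 2 * Qb n + ρ ^ 2 * D (n+1) ≤ S (n+1))
    (hQpos : ∀ j, 0 ≤ Qb j) :
    ∀ N : ℕ, 1 ≤ N →
      ∑ k ∈ Finset.Icc 1 N, ρ ^ (-(2 * ((k : ℤ) - 1))) * D k ≤
      ∑ k ∈ Finset.range (N + 1), ρ ^ (-(2 * (k : ℤ))) * S k := by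
  have main : ∀ N : ℕ,
      (∑ k ∈ Finset.Icc 1 N, ρ ^ (-(2 * ((k : ℤ) - 1))) * D k)
        + ρ ^ (-(2 * (N : ℤ))) * Qb N
      ≤ ∑ k ∈ Finset.range (N + 1), ρ ^ (-(2 * (k : ℤ))) * S k := by
    intro N
    induction N with
    | zero =>
      rw [Finset.Icc_eq_empty (by omega)]
      simpa using claim1
    | succ n ih =>
      rw [Finset.sum_Icc_succ_top (by omega : 1 ≤ n + 1), Finset.sum_range_succ]
      have hρne : ρ ≠ 0 := ne_of_gt hρ0
      have hwpos : (0:ℝ) ≤ ρ ^ (-(2 * ((n + 1 : ℕ) : ℤ))) := le_of_lt (zpow_pos hρ0 _)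
      have hc2 := mul_le_mul_of_nonneg_left (claim2 n) hwpos
      have hpow : ∀ c : ℝ, ρ ^ (-(2 * ((n + 1 : ℕ) : ℤ))) * (ρ ^ 2 * c)
          = ρ ^ (-(2 * (n : ℤ))) * c := by
        intro c
        rw [← mul_assoc, ← zpow_natCast ρ 2, ← zpow_add₀ hρne]
        congr 2
        push_cast
        ring
      have h1 := hpow (Qb n)
      have h2 := hpow (D (n+1))
      have hexp : ρ ^ (-(2 * (((n + 1 : ℕ) : ℤ) - 1))) = ρ ^ (-(2 * (n : ℤ))) := by
        congr 1
        push_cast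
        ring
      rw [hexp]
      nlinarith [hc2, ih, h1, h2]
  intro N hN
  have h := main N
  nlinarith [h, mul_nonneg (le_of_lt (zpow_pos hρ0 (-(2 * (N : ℤ))))) (hQpos N)]

end Aux

/-- Variational (off-by-one) integral quadratic constraint for a time-varying
gradient: the accumulated weighted supply dominates the accumulated change of
the shifted objective landscape. -/
theorem variational_iqc
    (d : ℕ) (hd : 1 ≤ d)
    (ρ : ℝ) (hρ0 : 0 < ρ) (hρ1 : ρ < 1)
    (f : ℕ → EuclideanSpace ℝ (Fin d) → ℝ)
    (f' : ℕ → EuclideanSpace ℝ (Fin d) → EuclideanSpace ℝ (Fin d))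
    (m L : ℕ → ℝ)
    (hm : ∀ k, 0 < m k) (hmL : ∀ k, m k < L k)
    (hgrad : ∀ k x, HasGradientAt (f k) (f' k x) x)
    (hsc : ∀ k, ConvexOn ℝ Set.univ (fun x => f k x - m k / 2 * ‖x‖ ^ 2))
    (hlip : ∀ k x y, ‖f' k x - f' k y‖ ≤ L k * ‖x - y‖)
    (xstar : ℕ → EuclideanSpace ℝ (Fin d))
    (hstar : ∀ k, f' k (xstar k) = 0)
    (x : ℕ → EuclideanSpace ℝ (Fin d))
    (a : ℕ → ℝ) (ha : ∀ k, a k = Real.sqrt (m k * (L k - m k) / 2))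
    (fhat : ℕ → EuclideanSpace ℝ (Fin d) → ℝ)
    (hfhat : ∀ k y, fhat k y = f k y - f k (xstar k))
    (S : ℕ → ℝ)
    (hS0 : S 0 = ⟪L 0 • (x 0 - xstar 0) - f' 0 (x 0),
                  f' 0 (x 0) - m 0 • (x 0 - xstar 0)⟫)
    (hSk : ∀ k : ℕ, S (k + 1) =
      ⟪L (k + 1) • (x (k + 1) - xstar (k + 1)) - f' (k + 1) (x (k + 1))
          - ρ ^ 2 • (L (k + 1) • ((x k - xstar k) + (xstar k - xstar (k + 1))))
          + ρ ^ 2 • (f' k (x k) - (f' k (x k) - f' (k + 1) (x k))),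
        f' (k + 1) (x (k + 1)) - m (k + 1) • (x (k + 1) - xstar (k + 1))⟫
      + ρ ^ 2 * (a k) ^ 2 * ‖x k - xstar k‖ ^ 2
      - ρ ^ 2 * (a (k + 1)) ^ 2 * ‖(x k - xstar k) + (xstar k - xstar (k + 1))‖ ^ 2
      + ρ ^ 2 / 2 * ‖f' k (x k) - m k • (x k - xstar k)‖ ^ 2
      - ρ ^ 2 / 2 * ‖f' k (x k) - (f' k (x k) - f' (k + 1) (x k))
          - m (k + 1) • ((x k - xstar k) + (xstar k - xstar (k + 1)))‖ ^ 2) :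
    ∀ N : ℕ, 1 ≤ N →
      ∑ k ∈ Finset.Icc 1 N, ρ ^ (-(2 * ((k : ℤ) - 1))) *
          ((L (k - 1) - m (k - 1)) * fhat (k - 1) (x (k - 1))
            - (L k - m k) * fhat k (x (k - 1))) ≤
      ∑ k ∈ Finset.range (N + 1), ρ ^ (-(2 * (k : ℤ))) * S k := by
  have hMpos : ∀ k, (0:ℝ) < L k - m k := fun k => sub_pos.2 (hmL k)
  have hint : ∀ k (z y : EuclideanSpace ℝ (Fin d)),
      (L k - m k) * (f k z - m k / 2 * ‖z - xstar k‖ ^ 2)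
        + (L k - m k) * ⟪f' k z - m k • (z - xstar k), y - z⟫
        + 1 / 2 * ‖(f' k y - m k • (y - xstar k)) - (f' k z - m k • (z - xstar k))‖ ^ 2
        ≤ (L k - m k) * (f k y - m k / 2 * ‖y - xstar k‖ ^ 2) :=
    fun k z y => interp_g' (xstar k) (hmL k) (hgrad k) (hsc k) (hlip k) z y
  have hKA : ∀ k (y : EuclideanSpace ℝ (Fin d)),
      (L k - m k) * (f k y - m k / 2 * ‖y - xstar k‖ ^ 2)
        + (L k - m k) * ⟪f' k y - m k • (y - xstar k), xstar k - y⟫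
        + 1 / 2 * ‖f' k y - m k • (y - xstar k)‖ ^ 2
        ≤ (L k - m k) * f k (xstar k) := by
    intro k y
    have h := hint k y (xstar k)
    simp only [hstar k, sub_self, smul_zero, sub_zero, zero_sub, norm_neg, norm_zero,
      inner_zero_left, mul_zero, add_zero, ne_eq, OfNat.ofNat_ne_zero, not_false_eq_true,
      zero_pow] at h
    exact h
  have hQA : ∀ k (y : EuclideanSpace ℝ (Fin d)),
      (L k - m k) * f k (xstar k) + 1 / 2 * ‖f' k y - m k • (y - xstar k)‖ ^ 2
        ≤ (L k - m k) * (f k y - m k / 2 * ‖y - xstar k‖ ^ 2) := by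
    intro k y
    have h := hint k (xstar k) y
    simp only [hstar k, sub_self, smul_zero, sub_zero, zero_sub, norm_neg, norm_zero,
      inner_zero_left, mul_zero, add_zero, ne_eq, OfNat.ofNat_ne_zero, not_false_eq_true,
      zero_pow] at h
    exact h
  apply telescope_aux ρ hρ0 S
    (fun j => (L j - m j) * (f j (x j) - m j / 2 * ‖x j - xstar j‖ ^ 2 - f j (xstar j))
      - 1 / 2 * ‖f' j (x j) - m j • (x j - xstar j)‖ ^ 2)
  · -- claim1
    rw [hS0]
    have hArg : L 0 • (x 0 - xstar 0) - f' 0 (x 0)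
        = (L 0 - m 0) • (x 0 - xstar 0) - (f' 0 (x 0) - m 0 • (x 0 - xstar 0)) := by
      module
    rw [hArg, inner_sub_left, real_inner_smul_left, real_inner_self_eq_norm_sq]
    have hA1 := hKA 0 (x 0)
    have hcv : ⟪f' 0 (x 0) - m 0 • (x 0 - xstar 0), xstar 0 - x 0⟫
        = -⟪x 0 - xstar 0, f' 0 (x 0) - m 0 • (x 0 - xstar 0)⟫ := by
      rw [real_inner_comm, show xstar 0 - x 0 = -(x 0 - xstar 0) from by abel,
        inner_neg_left]
    rw [hcv] at hA1
    nlinarith [hA1]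
  · -- claim2
    intro k
    show _ - _ + ρ ^ 2 * ((L k - m k) * fhat k (x k)
        - (L (k+1) - m (k+1)) * fhat (k+1) (x k)) ≤ S (k+1)
    have hveq : (x k - xstar k) + (xstar k - xstar (k+1)) = x k - xstar (k+1) := by abel
    have hsimp : f' k (x k) - (f' k (x k) - f' (k+1) (x k)) = f' (k+1) (x k) := by abel
    rw [hSk k, hveq, hsimp, hfhat, hfhat, ha k, ha (k+1)]
    rw [Real.sq_sqrt (by nlinarith [hm k, hMpos k] : (0:ℝ) ≤ m k * (L k - m k) / 2),
        Real.sq_sqrt (by nlinarith [hm (k+1), hMpos (k+1)] :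
          (0:ℝ) ≤ m (k+1) * (L (k+1) - m (k+1)) / 2)]
    have hArg : L (k+1) • (x (k+1) - xstar (k+1)) - f' (k+1) (x (k+1))
          - ρ ^ 2 • (L (k+1) • (x k - xstar (k+1)))
          + ρ ^ 2 • (f' (k+1) (x k))
        = (L (k+1) - m (k+1)) • (x (k+1) - xstar (k+1))
          - (f' (k+1) (x (k+1)) - m (k+1) • (x (k+1) - xstar (k+1)))
          - ρ ^ 2 • ((L (k+1) - m (k+1)) • (x k - xstar (k+1)))
          + ρ ^ 2 • (f' (k+1) (x k) - m (k+1) • (x k - xstar (k+1))) := by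
      module
    rw [hArg]
    obtain ⟨G1, hG1⟩ : ∃ G1, f' (k+1) (x (k+1)) - m (k+1) • (x (k+1) - xstar (k+1)) = G1 :=
      ⟨_, rfl⟩
    obtain ⟨G0, hG0⟩ : ∃ G0, f' (k+1) (x k) - m (k+1) • (x k - xstar (k+1)) = G0 :=
      ⟨_, rfl⟩
    rw [hG1, hG0]
    rw [inner_add_left, inner_sub_left, inner_sub_left, real_inner_smul_left,
        real_inner_smul_left, real_inner_smul_left, real_inner_smul_left,
        real_inner_self_eq_norm_sq]
    have hA1 := hKA (k+1) (x (k+1))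
    rw [hG1] at hA1
    have hcv : ⟪G1, xstar (k+1) - x (k+1)⟫ = -⟪x (k+1) - xstar (k+1), G1⟫ := by
      rw [real_inner_comm, show xstar (k+1) - x (k+1) = -(x (k+1) - xstar (k+1)) from by abel,
        inner_neg_left]
    rw [hcv] at hA1
    have hB := hint (k+1) (x (k+1)) (x k)
    rw [hG1, hG0] at hB
    have hcv2 : ⟪G1, x k - x (k+1)⟫
        = ⟪x k - xstar (k+1), G1⟫ - ⟪x (k+1) - xstar (k+1), G1⟫ := by
      rw [real_inner_comm, ← inner_sub_left]
      congr 1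
      abel
    have hnn : ‖G0 - G1‖ ^ 2 = ‖G0‖ ^ 2 - 2 * ⟪G0, G1⟫ + ‖G1‖ ^ 2 :=
      norm_sub_sq_real G0 G1
    rw [hcv2, hnn] at hB
    have h1ρ : (0:ℝ) ≤ 1 - ρ ^ 2 := by nlinarith
    have e1 := mul_le_mul_of_nonneg_left hA1 h1ρ
    have e2 := mul_le_mul_of_nonneg_left hB (sq_nonneg ρ)
    linarith [e1, e2]
  · -- Q nonneg
    intro j
    have h := hQA j (x j)
    nlinarith [h]
end

section
/- Assume the time-varying LPV-algorithm setting with variational IQCs (see context). Suppose there exist ρ ∈ (0,1), constants λ_1,…,λ_p ≥ 0, γ_ξ ≥ 0, γ_δ ≥ 0, 0 < λ̲ ≤ λ̄, and a family P(θ) of symmetric (n_ξ + 4pd)×(n_ξ + 4pd) matrices with λ̲‖v‖² ≤ vᵀP(θ)v ≤ λ̄‖v‖² for all θ ∈ Θ, such that for all (θ, Δθ) ∈ V and all vectors ξ̃ ∈ ℝ^{n_ξ}, ζ = (ζ¹ᵢ, ζ²ᵢ, ζ³ᵢ, ζ⁴ᵢ)_{i=1..p} ∈ ℝ^{4pd},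 u ∈ ℝ^{pd} (blocks uⁱ), Δ ∈ ℝ^{n_ξ}, w ∈ ℝ^{pd} (blocks wⁱ), the following dissipation inequality holds: writing s̃ := C(θ)ξ̃ + D(θ)u (blocks s̃ⁱ), η₊ := ( A(θ)ξ̃ + B(θ)u + Δ, ( s̃ⁱ + C₁(θ)Δ, uⁱ − wⁱ, uⁱ − m(θ)s̃ⁱ, a(θ)s̃ⁱ )_{i=1..p} ), and σⁱ := ⟨ L(θ)s̃ⁱ − uⁱ − ρ²L(θ)ζ¹ᵢ + ρ²ζ²ᵢ, uⁱ − m(θ)s̃ⁱ ⟩ + ρ²‖ζ⁴ᵢ‖² − ρ² a(θ)² ‖ζ¹ᵢ‖² + (ρ²/2)‖ζ³ᵢ‖² − (ρ²/2)‖ζ²ᵢ − m(θ)ζ¹ᵢ‖², one has ‖η₊‖²_{P(θ+Δθ)} − ρ² ‖(ξ̃, ζ)‖²_{P(θ)} + Σ_{i=1}^{p} λ_i σⁱ − γ_ξ ‖Δ‖² − γ_δ ‖w‖² ≤ 0. Let (θ_k) satisfy (θ_k, θ_{k+1} − θ_k) ∈ V for all k, and let (ξ_k, u_k, y_k) obey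 ξ_{k+1} = A(θ_k)ξ_k + B(θ_k)u_k, y_k = C(θ_k)ξ_k + D(θ_k)u_k, with blocks s_kⁱ of y_k and u_kⁱ = ∇_x f(s_kⁱ, θ_k). Set x⋆_k := x⋆(θ_k), ξ⋆_k := U x⋆_k, Δξ⋆_k := ξ⋆_k − ξ⋆_{k+1}, Δδ_k(x) := ∇_x f(x, θ_k) − ∇_x f(x, θ_{k+1}), f̂_k(x) := f(x, θ_k) − f(x⋆_k, θ_k), m_k := m(θ_k), L_k := L(θ_k). Then for all k ≥ 1: ‖ξ_k − ξ⋆_k‖² ≤ (λ̄/λ̲) ρ^{2k} ‖ξ_0 − ξ⋆_0‖² + (1/λ̲) Σ_{t=1}^{k} ρ^{2(k−t)} ( γ_ξ ‖Δξ⋆_{t−1}‖² + γ_δ Σ_{i=1}^{p} ‖Δδ_{t−1}(s_{t−1}ⁱ)‖² ) + (1/λ̲) Σ_{i=1}^{p} λ_i Σ_{t=1}^{k−1} ρ^{2(k−t)} ( (L_t − m_t) f̂_t(s_{t−1}ⁱ) − (L_{t−1} − m_{t−1}) f̂_{t−1}(s_{t−1}ⁱ) ). -/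
open scoped RealInnerProductSpace

/-- Cast a plain function vector to Euclidean space. -/
def toE {ι : Type*} [Fintype ι] (v : ι → ℝ) : EuclideanSpace ℝ ι := WithLp.toLp 2 v

/-- The `i`-th `d`-dimensional block of a stacked vector. -/
def blk {d r : ℕ} (v : Fin r × Fin d → ℝ) (i : Fin r) : Fin d → ℝ :=
  fun j => v (i, j)

/-- The quadratic form `vᵀ P v`. -/
def quadForm {ι : Type*} [Fintype ι] (P : Matrix ι ι ℝ) (v : ι → ℝ) : ℝ :=
  dotProduct v (P.mulVec v)

/-- Pack the algorithm state and the IQC filter states into a single vector. -/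
def pack (nξ p d : ℕ) (ξ : Fin nξ → ℝ) (ζ : Fin p → Fin 4 → Fin d → ℝ) :
    (Fin nξ ⊕ (Fin p × Fin 4 × Fin d)) → ℝ :=
  Sum.elim ξ (fun z => ζ z.1 z.2.1 z.2.2)

set_option linter.unusedVariables false
set_option linter.unusedSectionVars false
set_option maxHeartbeats 1000000

section Analysis

variable {E : Type*} [NormedAddCommGroup E] [InnerProductSpace ℝ E] [CompleteSpace E]

/-- directional derivative of a function with gradient along a line -/
lemma dir_deriv (g : E → ℝ) (g' : E → E) (hg : ∀ z, HasGradientAt g (g' z) z)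
    (x v : E) (t : ℝ) :
    HasDerivAt (fun s : ℝ => g (x + s • v)) ⟪g' (x + t • v), v⟫ t := by
  have hcurve : HasDerivAt (fun s : ℝ => x + s • v) v t := by
    simpa using ((hasDerivAt_id t).smul_const v).const_add x
  have hf := (hasGradientAt_iff_hasFDerivAt.mp (hg (x + t • v)))
  have := hf.comp_hasDerivAt t hcurve
  simp [InnerProductSpace.toDual_apply_apply] at this
  exact this

/-- gradient inequality for convex functions -/
lemma convex_grad_ineq (g : E → ℝ) (g' : E → E)
    (hconv : ConvexOn ℝ Set.univ g) (hg : ∀ z, HasGradientAt g (g' z) z)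
    (x y : E) : g x + ⟪g' x, y - x⟫ ≤ g y := by
  set v := y - x with hv
  have hφ : ∀ t : ℝ, HasDerivAt (fun s : ℝ => g (x + s • v)) ⟪g' (x + t • v), v⟫ t :=
    dir_deriv g g' hg x v
  have hφc : ConvexOn ℝ Set.univ (fun s : ℝ => g (x + s • v)) := by
    have := hconv.comp_affineMap (AffineMap.lineMap x y : ℝ →ᵃ[ℝ] E)
    have heq : (fun s : ℝ => g (x + s • v)) = g ∘ (AffineMap.lineMap x y : ℝ →ᵃ[ℝ] E) := by
      funext s
      show g (x + s • v) = g (AffineMap.lineMap x y s)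
      congr 1
      rw [AffineMap.lineMap_apply]
      simp [hv]
      abel
    rw [heq]
    simpa using this
  have hsl := hφc.le_slope_of_hasDerivAt (Set.mem_univ (0:ℝ)) (Set.mem_univ (1:ℝ)) one_pos
    (by simpa using hφ 0)
  rw [slope_def_field] at hsl
  have h0 : x + (0:ℝ) • v = x := by simp
  have h1 : x + (1:ℝ) • v = y := by simp [hv]
  rw [h0, h1] at hsl
  have : ⟪g' x, v⟫ ≤ g y - g x := by
    simpa using hsl
  linarith

/-- descent lemma from a one-sided monotonicity bound on the gradient -/
lemma descent_lemma_s10 (g : E → ℝ) (g' : E → E) (ℓ : ℝ) (hℓ : 0 ≤ ℓ)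
    (hg : ∀ z, HasGradientAt g (g' z) z)
    (hmono : ∀ x y : E, ⟪g' x - g' y, x - y⟫ ≤ ℓ * ‖x - y‖ ^ 2)
    (x y : E) : g y ≤ g x + ⟪g' x, y - x⟫ + ℓ / 2 * ‖y - x‖ ^ 2 := by
  set v := y - x with hv
  set D : ℝ → ℝ := fun t => ⟪g' (x + t • v), v⟫ with hD
  have hφ : ∀ t : ℝ, HasDerivAt (fun s : ℝ => g (x + s • v)) (D t) t :=
    dir_deriv g g' hg x v
  -- derivative bound: D t ≤ D 0 + ℓ t ‖v‖² for t ≥ 0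
  have hDb : ∀ t : ℝ, 0 ≤ t → D t ≤ D 0 + ℓ * t * ‖v‖ ^ 2 := by
    intro t ht
    rcases eq_or_lt_of_le ht with h | h
    · simp [← h]
    · have hm := hmono (x + t • v) (x + 0 • v)
      have hxy : (x + t • v) - (x + 0 • v) = t • v := by
        simp
      rw [hxy] at hm
      have : ⟪g' (x + t • v) - g' (x + 0 • v), t • v⟫ = t * (D t - D 0) := by
        rw [inner_smul_right, inner_sub_left]
        simp [hD]
      rw [this] at hm
      have hnorm : ‖t • v‖ ^ 2 = t ^ 2 * ‖v‖ ^ 2 := by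
        rw [norm_smul]
        simp [mul_pow, sq_abs]
      rw [hnorm] at hm
      nlinarith
  -- the auxiliary function ψ
  set ψ : ℝ → ℝ := fun t => g (x + t • v) - t * D 0 - ℓ * t ^ 2 / 2 * ‖v‖ ^ 2 with hψ
  have hψ' : ∀ t : ℝ, HasDerivAt ψ (D t - D 0 - ℓ * t * ‖v‖ ^ 2) t := by
    intro t
    have h1 : HasDerivAt (fun s : ℝ => s * D 0) (D 0) t := by
      simpa using (hasDerivAt_id t).mul_const (D 0)
    have h2 : HasDerivAt (fun s : ℝ => ℓ * s ^ 2 / 2 * ‖v‖ ^ 2) (ℓ * t * ‖v‖ ^ 2) t := by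
      have : HasDerivAt (fun s : ℝ => s ^ 2) (2 * t) t := by
        simpa using hasDerivAt_pow 2 t
      have := ((this.const_mul ℓ).div_const 2).mul_const (‖v‖ ^ 2)
      exact this.congr_deriv (by ring)
    exact ((hφ t).sub h1).sub h2
  have hanti : AntitoneOn ψ (Set.Icc (0:ℝ) 1) := by
    apply antitoneOn_of_deriv_nonpos (convex_Icc 0 1)
    · exact fun t _ => ((hψ' t).continuousAt).continuousWithinAt
    · exact fun t _ => ((hψ' t).differentiableAt).differentiableWithinAt
    · intro t ht
      rw [interior_Icc] at ht
      rw [(hψ' t).deriv]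
      have := hDb t (le_of_lt ht.1)
      linarith
  have h01 := hanti (Set.mem_Icc.mpr ⟨le_refl 0, zero_le_one⟩)
    (Set.mem_Icc.mpr ⟨zero_le_one, le_refl 1⟩) zero_le_one
  have h0 : x + (0:ℝ) • v = x := by simp
  have h1 : x + (1:ℝ) • v = y := by simp [hv]
  simp only [hψ, h0, h1] at h01
  have hD0 : D 0 = ⟪g' x, v⟫ := by simp [hD, h0]
  rw [hD0] at h01
  norm_num at h01
  linarith

/-- interpolation inequality for convex functions with "ℓ-smooth" gradient -/
lemma interp_ineq (g : E → ℝ) (g' : E → E) (ℓ : ℝ) (hℓ : 0 < ℓ)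
    (hconv : ConvexOn ℝ Set.univ g) (hg : ∀ z, HasGradientAt g (g' z) z)
    (hmono : ∀ x y : E, ⟪g' x - g' y, x - y⟫ ≤ ℓ * ‖x - y‖ ^ 2)
    (u v : E) :
    g v + ⟪g' v, u - v⟫ + 1 / (2 * ℓ) * ‖g' u - g' v‖ ^ 2 ≤ g u := by
  set G := g' u - g' v with hG
  set w := u - ℓ⁻¹ • G with hw
  have h1 : g v + ⟪g' v, w - v⟫ ≤ g w := convex_grad_ineq g g' hconv hg v w
  have h2 : g w ≤ g u + ⟪g' u, w - u⟫ + ℓ / 2 * ‖w - u‖ ^ 2 :=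
    descent_lemma_s10 g g' ℓ (le_of_lt hℓ) hg hmono u w
  have hwu : w - u = -(ℓ⁻¹ • G) := by rw [hw]; abel
  have e1 : ⟪g' u, w - u⟫ = -(ℓ⁻¹ * ⟪g' u, G⟫) := by
    rw [hwu, inner_neg_right, real_inner_smul_right]
  have e2 : ‖w - u‖ ^ 2 = ℓ⁻¹ ^ 2 * ‖G‖ ^ 2 := by
    rw [hwu, norm_neg, norm_smul]
    simp [mul_pow, sq_abs]
  have e3 : ⟪g' v, w - v⟫ = ⟪g' v, u - v⟫ - ℓ⁻¹ * ⟪g' v, G⟫ := by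
    have : w - v = (u - v) - ℓ⁻¹ • G := by rw [hw]; abel
    rw [this, inner_sub_right, real_inner_smul_right]
  have e4 : ⟪g' u, G⟫ - ⟪g' v, G⟫ = ‖G‖ ^ 2 := by
    rw [← inner_sub_left, ← hG, real_inner_self_eq_norm_sq]
  rw [e3] at h1
  rw [e1, e2] at h2
  have hℓ' : ℓ ≠ 0 := ne_of_gt hℓ
  have : g v + ⟪g' v, u - v⟫ - ℓ⁻¹ * ⟪g' v, G⟫ ≤
      g u - ℓ⁻¹ * ⟪g' u, G⟫ + ℓ / 2 * (ℓ⁻¹ ^ 2 * ‖G‖ ^ 2) := by linarith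
  have hfin : ℓ / 2 * (ℓ⁻¹ ^ 2 * ‖G‖ ^ 2) = 1 / (2 * ℓ) * ‖G‖ ^ 2 := by
    field_simp
  rw [hfin] at this
  have e5 : ℓ⁻¹ * ⟪g' u, G⟫ - ℓ⁻¹ * ⟪g' v, G⟫ = ℓ⁻¹ * ‖G‖ ^ 2 := by
    rw [← mul_sub, e4]
  have e6 : ℓ⁻¹ * ‖G‖ ^ 2 = 2 * (1 / (2 * ℓ)) * ‖G‖ ^ 2 := by
    field_simp
  linarith

section Key

variable (h : E → ℝ) (h' : E → E) (ℓ : ℝ) (xs : E)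

/-- the residual `R̃` is nonnegative -/
lemma Rtilde_nonneg (hℓ : 0 < ℓ)
    (hint : ∀ u v : E, h v + ⟪h' v, u - v⟫ + 1 / (2 * ℓ) * ‖h' u - h' v‖ ^ 2 ≤ h u)
    (hmin : h xs = 0) (hg0 : h' xs = 0) (y : E) :
    0 ≤ ℓ * ⟪h' y, y - xs⟫ - 1 / 2 * ‖h' y‖ ^ 2 - ℓ * h y := by
  have := hint xs y
  rw [hmin, hg0] at this
  have e1 : ⟪h' y, xs - y⟫ = -⟪h' y, y - xs⟫ := by
    rw [← inner_neg_right]; congr 1; abel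
  have e2 : ‖(0 : E) - h' y‖ ^ 2 = ‖h' y‖ ^ 2 := by
    rw [zero_sub, norm_neg]
  rw [e1, e2] at this
  have hm : ℓ * (h y + -⟪h' y, y - xs⟫ + 1 / (2 * ℓ) * ‖h' y‖ ^ 2) ≤ 0 := by
    exact mul_nonpos_of_nonneg_of_nonpos (le_of_lt hℓ) this
  have he : ℓ * (1 / (2 * ℓ) * ‖h' y‖ ^ 2) = 1 / 2 * ‖h' y‖ ^ 2 := by
    field_simp
  nlinarith [hm, he]

/-- the stored energy `R` is nonnegative -/
lemma R_nonneg (hℓ : 0 < ℓ)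
    (hint : ∀ u v : E, h v + ⟪h' v, u - v⟫ + 1 / (2 * ℓ) * ‖h' u - h' v‖ ^ 2 ≤ h u)
    (hmin : h xs = 0) (hg0 : h' xs = 0) (y : E) :
    0 ≤ ℓ * h y - 1 / 2 * ‖h' y‖ ^ 2 := by
  have := hint y xs
  rw [hmin, hg0] at this
  have e2 : ‖h' y - 0‖ ^ 2 = ‖h' y‖ ^ 2 := by rw [sub_zero]
  rw [e2] at this
  simp only [inner_zero_left, zero_add, add_zero] at this
  have hm : ℓ * (1 / (2 * ℓ) * ‖h' y‖ ^ 2) ≤ ℓ * h y :=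
    mul_le_mul_of_nonneg_left this (le_of_lt hℓ)
  have he : ℓ * (1 / (2 * ℓ) * ‖h' y‖ ^ 2) = 1 / 2 * ‖h' y‖ ^ 2 := by
    field_simp
  linarith

/-- the bracket lower bound -/
lemma bracket_ge (hℓ : 0 < ℓ)
    (hint : ∀ u v : E, h v + ⟪h' v, u - v⟫ + 1 / (2 * ℓ) * ‖h' u - h' v‖ ^ 2 ≤ h u)
    (x y : E) :
    -(ℓ * ⟪h' y, y - xs⟫ - 1 / 2 * ‖h' y‖ ^ 2 - ℓ * h y) ≤
      ℓ * h x - ℓ * ⟪h' y, x - xs⟫ + ⟪h' x, h' y⟫ - 1 / 2 * ‖h' x‖ ^ 2 := by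
  have := hint x y
  have hm : ℓ * (h y + ⟪h' y, x - y⟫ + 1 / (2 * ℓ) * ‖h' x - h' y‖ ^ 2) ≤ ℓ * h x :=
    mul_le_mul_of_nonneg_left this (le_of_lt hℓ)
  have he : ℓ * (1 / (2 * ℓ) * ‖h' x - h' y‖ ^ 2) = 1 / 2 * ‖h' x - h' y‖ ^ 2 := by
    field_simp
  have hexp : ‖h' x - h' y‖ ^ 2 = ‖h' x‖ ^ 2 - 2 * ⟪h' x, h' y⟫ + ‖h' y‖ ^ 2 := by
    rw [← real_inner_self_eq_norm_sq, inner_sub_sub_self, real_inner_self_eq_norm_sq,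
      real_inner_self_eq_norm_sq, real_inner_comm (h' y) (h' x)]
    ring
  have hsplit : ⟪h' y, x - y⟫ = ⟪h' y, x - xs⟫ - ⟪h' y, y - xs⟫ := by
    rw [← inner_sub_right]; congr 1; abel
  rw [hsplit] at hm
  nlinarith [hm, he, hexp]

/-- master per-step inequality: `R̃ + ρ² · Bracket ≥ 0` -/
lemma sigma_key (hℓ : 0 < ℓ) (ρ2 : ℝ) (hρ0 : 0 ≤ ρ2) (hρ1 : ρ2 ≤ 1)
    (hint : ∀ u v : E, h v + ⟪h' v, u - v⟫ + 1 / (2 * ℓ) * ‖h' u - h' v‖ ^ 2 ≤ h u)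
    (hmin : h xs = 0) (hg0 : h' xs = 0) (x y : E) :
    0 ≤ (ℓ * ⟪h' y, y - xs⟫ - 1 / 2 * ‖h' y‖ ^ 2 - ℓ * h y) +
      ρ2 * (ℓ * h x - ℓ * ⟪h' y, x - xs⟫ + ⟪h' x, h' y⟫ - 1 / 2 * ‖h' x‖ ^ 2) := by
  have hR := Rtilde_nonneg h h' ℓ xs hℓ hint hmin hg0 y
  have hB := bracket_ge h h' ℓ xs hℓ hint x y
  nlinarith [hR, hB]

end Key

section Shift

/-- gradient of the shifted function -/
lemma shifted_gradient (F : E → ℝ) (F' : E → E) (mθ : ℝ)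
    (hgrad : ∀ x, HasGradientAt F (F' x) x) (c : E) (z : E) :
    HasGradientAt (fun z => F z - F c - mθ / 2 * ‖z - c‖ ^ 2)
      (F' z - mθ • (z - c)) z := by
  rw [hasGradientAt_iff_hasFDerivAt]
  have hq : HasFDerivAt (fun z : E => ‖z - c‖ ^ 2)
      ((fderivInnerCLM ℝ (z - c, z - c)).comp
        (((ContinuousLinearMap.id ℝ E).prod (ContinuousLinearMap.id ℝ E)))) z := by
    have hid : HasFDerivAt (fun z : E => z - c) (ContinuousLinearMap.id ℝ E) z :=
      (hasFDerivAt_id z).sub_const c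
    have := (hid.inner ℝ hid)
    have heq : (fun z : E => (⟪z - c, z - c⟫ : ℝ)) = fun z : E => ‖z - c‖ ^ 2 := by
      funext w
      rw [real_inner_self_eq_norm_sq]
    rw [← heq]
    exact this
  have hF := hasGradientAt_iff_hasFDerivAt.mp (hgrad z)
  have hsum := (hF.sub_const (F c)).sub ((hq.const_mul (mθ / 2)))
  refine hsum.congr_fderiv ?_
  apply ContinuousLinearMap.ext
  intro w
  simp only [ContinuousLinearMap.sub_apply, ContinuousLinearMap.smul_apply,
    ContinuousLinearMap.comp_apply, ContinuousLinearMap.prod_apply,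
    ContinuousLinearMap.id_apply, fderivInnerCLM_apply,
    InnerProductSpace.toDual_apply_apply]
  rw [inner_sub_left (F' z), real_inner_smul_left]
  rw [smul_eq_mul]
  rw [real_inner_comm (z - c) w]
  ring

/-- convexity of the shifted function -/
lemma shifted_convex (F : E → ℝ) (mθ : ℝ)
    (hsc : ConvexOn ℝ Set.univ (fun z => F z - mθ / 2 * ‖z‖ ^ 2)) (c : E) :
    ConvexOn ℝ Set.univ (fun z => F z - F c - mθ / 2 * ‖z - c‖ ^ 2) := by
  have haff : ConvexOn ℝ Set.univ
      (fun z : E => mθ * ⟪z, c⟫ - mθ / 2 * ‖c‖ ^ 2 - F c) := by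
    refine ⟨convex_univ, ?_⟩
    intro u _ v _ α β hα hβ hab
    simp only [smul_eq_mul]
    rw [inner_add_left, real_inner_smul_left, real_inner_smul_left]
    have : α * (mθ / 2 * ‖c‖ ^ 2 + F c) + β * (mθ / 2 * ‖c‖ ^ 2 + F c)
        = mθ / 2 * ‖c‖ ^ 2 + F c := by
      rw [← add_mul, hab, one_mul]
    nlinarith [this]
  have := hsc.add haff
  have heq : (fun z : E => F z - F c - mθ / 2 * ‖z - c‖ ^ 2)
      = fun z : E => (F z - mθ / 2 * ‖z‖ ^ 2) + (mθ * ⟪z, c⟫ - mθ / 2 * ‖c‖ ^ 2 - F c) := by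
    funext z
    have hns : ‖z - c‖ ^ 2 = ‖z‖ ^ 2 - 2 * ⟪z, c⟫ + ‖c‖ ^ 2 := by
      rw [← real_inner_self_eq_norm_sq, inner_sub_sub_self, real_inner_self_eq_norm_sq,
        real_inner_self_eq_norm_sq, real_inner_comm c z]
      ring
    rw [hns]
    ring
  rw [heq]
  exact this

/-- monotonicity bound for the shifted gradient -/
lemma shifted_mono (F' : E → E) (mθ Lθ : ℝ)
    (hlip : ∀ x y, ‖F' x - F' y‖ ≤ Lθ * ‖x - y‖) (c : E) (x y : E) :
    ⟪(F' x - mθ • (x - c)) - (F' y - mθ • (y - c)), x - y⟫ ≤ (Lθ - mθ) * ‖x - y‖ ^ 2 := by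
  have hd : (F' x - mθ • (x - c)) - (F' y - mθ • (y - c)) = (F' x - F' y) - mθ • (x - y) := by
    rw [smul_sub, smul_sub, smul_sub]
    abel
  rw [hd, inner_sub_left, real_inner_smul_left, real_inner_self_eq_norm_sq]
  have h1 : (⟪F' x - F' y, x - y⟫ : ℝ) ≤ ‖F' x - F' y‖ * ‖x - y‖ := real_inner_le_norm _ _
  have h2 : ‖F' x - F' y‖ * ‖x - y‖ ≤ (Lθ * ‖x - y‖) * ‖x - y‖ :=
    mul_le_mul_of_nonneg_right (hlip x y) (norm_nonneg _)
  nlinarith [h1, h2]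

/-- the interpolation inequality for the shifted function -/
lemma shifted_interp (F : E → ℝ) (F' : E → E) (mθ Lθ : ℝ) (hmLθ : mθ < Lθ)
    (hgrad : ∀ x, HasGradientAt F (F' x) x)
    (hsc : ConvexOn ℝ Set.univ (fun z => F z - mθ / 2 * ‖z‖ ^ 2))
    (hlip : ∀ x y, ‖F' x - F' y‖ ≤ Lθ * ‖x - y‖) (c : E) :
    ∀ u v : E, (F v - F c - mθ / 2 * ‖v - c‖ ^ 2)
        + ⟪F' v - mθ • (v - c), u - v⟫
        + 1 / (2 * (Lθ - mθ)) * ‖(F' u - mθ • (u - c)) - (F' v - mθ • (v - c))‖ ^ 2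
      ≤ F u - F c - mθ / 2 * ‖u - c‖ ^ 2 := by
  intro u v
  exact interp_ineq (fun z => F z - F c - mθ / 2 * ‖z - c‖ ^ 2)
    (fun z => F' z - mθ • (z - c)) (Lθ - mθ) (by linarith)
    (shifted_convex F mθ hsc c)
    (shifted_gradient F F' mθ hgrad c)
    (shifted_mono F' mθ Lθ hlip c) u v

end Shift

section SigmaStep

/-- lower bound for the supply rate at step 0 (zero filter state) -/
lemma sigma_step0 (m1 L1 : ℝ) (hmL1 : m1 < L1)
    (F1 : E → ℝ) (F1' : E → E) (c1 : E)
    (hgrad1 : ∀ z, HasGradientAt F1 (F1' z) z)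
    (hsc1 : ConvexOn ℝ Set.univ (fun z => F1 z - m1 / 2 * ‖z‖ ^ 2))
    (hlip1 : ∀ xx yy, ‖F1' xx - F1' yy‖ ≤ L1 * ‖xx - yy‖)
    (hc1 : F1' c1 = 0) (y : E) :
    (L1 - m1) * (F1 y - F1 c1 - m1 / 2 * ‖y - c1‖ ^ 2)
        - 1 / 2 * ‖F1' y - m1 • (y - c1)‖ ^ 2
      ≤ ⟪L1 • (y - c1) - F1' y, F1' y - m1 • (y - c1)⟫ := by
  have hint := shifted_interp F1 F1' m1 L1 hmL1 hgrad1 hsc1 hlip1 c1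
  have hmin : F1 c1 - F1 c1 - m1 / 2 * ‖c1 - c1‖ ^ 2 = 0 := by simp
  have hg0 : F1' c1 - m1 • (c1 - c1) = 0 := by simp [hc1]
  have hR := Rtilde_nonneg (fun z => F1 z - F1 c1 - m1 / 2 * ‖z - c1‖ ^ 2)
    (fun z => F1' z - m1 • (z - c1)) (L1 - m1) c1 (by linarith) hint hmin hg0 y
  have hv : L1 • (y - c1) - F1' y
      = (L1 - m1) • (y - c1) - (F1' y - m1 • (y - c1)) := by module
  rw [hv, inner_sub_left, real_inner_smul_left, real_inner_self_eq_norm_sq,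
    real_inner_comm]
  linarith [hR]

/-- lower bound for the supply rate at step `k ≥ 1` -/
lemma sigma_step (ρ2 m0 L0 m1 L1 a0 a1 : ℝ)
    (hρ0 : 0 ≤ ρ2) (hρ1 : ρ2 ≤ 1) (hmL1 : m1 < L1)
    (ha0 : a0 ^ 2 = m0 * (L0 - m0) / 2) (ha1 : a1 ^ 2 = m1 * (L1 - m1) / 2)
    (F0 F1 : E → ℝ) (F0' F1' : E → E) (c0 c1 : E)
    (hgrad1 : ∀ z, HasGradientAt F1 (F1' z) z)
    (hsc1 : ConvexOn ℝ Set.univ (fun z => F1 z - m1 / 2 * ‖z‖ ^ 2))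
    (hlip1 : ∀ xx yy, ‖F1' xx - F1' yy‖ ≤ L1 * ‖xx - yy‖)
    (hc1 : F1' c1 = 0)
    (x y : E) :
    ((L1 - m1) * (F1 y - F1 c1 - m1 / 2 * ‖y - c1‖ ^ 2)
        - 1 / 2 * ‖F1' y - m1 • (y - c1)‖ ^ 2)
      - ρ2 * ((L0 - m0) * (F0 x - F0 c0 - m0 / 2 * ‖x - c0‖ ^ 2)
        - 1 / 2 * ‖F0' x - m0 • (x - c0)‖ ^ 2)
      - ρ2 * ((L1 - m1) * (F1 x - F1 c1) - (L0 - m0) * (F0 x - F0 c0))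
    ≤ ⟪L1 • (y - c1) - F1' y - ρ2 • (L1 • (x - c1)) + ρ2 • F1' x,
          F1' y - m1 • (y - c1)⟫
      + ρ2 * ‖a0 • (x - c0)‖ ^ 2 - ρ2 * a1 ^ 2 * ‖x - c1‖ ^ 2
      + ρ2 / 2 * ‖F0' x - m0 • (x - c0)‖ ^ 2
      - ρ2 / 2 * ‖F1' x - m1 • (x - c1)‖ ^ 2 := by
  have hint := shifted_interp F1 F1' m1 L1 hmL1 hgrad1 hsc1 hlip1 c1
  have hmin : F1 c1 - F1 c1 - m1 / 2 * ‖c1 - c1‖ ^ 2 = 0 := by simp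
  have hg0 : F1' c1 - m1 • (c1 - c1) = 0 := by simp [hc1]
  have hkey := sigma_key (fun z => F1 z - F1 c1 - m1 / 2 * ‖z - c1‖ ^ 2)
    (fun z => F1' z - m1 • (z - c1)) (L1 - m1) c1 (by linarith) ρ2 hρ0 hρ1
    hint hmin hg0 x y
  -- expand the inner product
  have hv : L1 • (y - c1) - F1' y - ρ2 • (L1 • (x - c1)) + ρ2 • F1' x
      = (L1 - m1) • (y - c1) - (F1' y - m1 • (y - c1))
        + ρ2 • ((F1' x - m1 • (x - c1)) - (L1 - m1) • (x - c1)) := by module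
  have e_inner : ⟪L1 • (y - c1) - F1' y - ρ2 • (L1 • (x - c1)) + ρ2 • F1' x,
        F1' y - m1 • (y - c1)⟫
      = (L1 - m1) * ⟪F1' y - m1 • (y - c1), y - c1⟫
        - ‖F1' y - m1 • (y - c1)‖ ^ 2
        + ρ2 * ⟪F1' x - m1 • (x - c1), F1' y - m1 • (y - c1)⟫
        - ρ2 * ((L1 - m1) * ⟪F1' y - m1 • (y - c1), x - c1⟫) := by
    have p1 : ⟪(L1 - m1) • (y - c1), F1' y - m1 • (y - c1)⟫
        = (L1 - m1) * ⟪F1' y - m1 • (y - c1), y - c1⟫ := by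
      rw [real_inner_smul_left, real_inner_comm]
    have p2 : ⟪(F1' y - m1 • (y - c1) : E), F1' y - m1 • (y - c1)⟫
        = ‖F1' y - m1 • (y - c1)‖ ^ 2 := real_inner_self_eq_norm_sq _
    have p3 : ⟪ρ2 • ((F1' x - m1 • (x - c1)) - (L1 - m1) • (x - c1)),
          F1' y - m1 • (y - c1)⟫
        = ρ2 * ⟪F1' x - m1 • (x - c1), F1' y - m1 • (y - c1)⟫
          - ρ2 * ((L1 - m1) * ⟪F1' y - m1 • (y - c1), x - c1⟫) := by
      rw [real_inner_smul_left, inner_sub_left, real_inner_smul_left,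
        real_inner_comm (x - c1)]
      ring
    rw [hv, inner_add_left, inner_sub_left, p1, p2, p3]
    ring
  have ea0 : ‖a0 • (x - c0)‖ ^ 2 = m0 * (L0 - m0) / 2 * ‖x - c0‖ ^ 2 := by
    rw [norm_smul]
    simp only [Real.norm_eq_abs, mul_pow, sq_abs]
    rw [ha0]
  rw [e_inner, ea0, ha1]
  linarith [hkey]

end SigmaStep

end Analysis

section Convert

/-- dot products are inner products in Euclidean space -/
lemma dotP_toE {ι : Type*} [Fintype ι] (v w : ι → ℝ) :
    dotProduct v w = ⟪toE v, toE w⟫ := by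
  simp [dotProduct, PiLp.inner_apply, RCLike.inner_apply, toE, mul_comm]

/-- squared Euclidean norm as a sum of squares -/
lemma normE_sq {ι : Type*} [Fintype ι] (v : ι → ℝ) :
    ‖toE v‖ ^ 2 = ∑ i, v i ^ 2 := by
  simp [toE, EuclideanSpace.norm_sq_eq]

/-- squared norm of a packed vector -/
lemma pack_norm_sq (nξ p d : ℕ) (w : Fin nξ → ℝ) (z : Fin p → Fin 4 → Fin d → ℝ) :
    ‖toE (pack nξ p d w z)‖ ^ 2
      = ‖toE w‖ ^ 2 + ∑ q : Fin p × Fin 4 × Fin d, (z q.1 q.2.1 q.2.2) ^ 2 := by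
  rw [normE_sq, normE_sq, Fintype.sum_sum_type]
  rfl

/-- a stacked squared norm is the sum of blockwise squared norms -/
lemma stack_norm_sq {p d : ℕ} (g : Fin p × Fin d → ℝ) :
    ‖toE g‖ ^ 2 = ∑ i : Fin p, ‖toE (blk g i)‖ ^ 2 := by
  simp only [normE_sq]
  rw [Fintype.sum_prod_type]
  rfl

end Convert


/-- Tracking theorem with variational IQCs for LPV first-order algorithms on
time-varying strongly convex problems. -/
theorem tracking_bound_variational_iqc
    (d p nξ nθ : ℕ) (hd : 1 ≤ d) (hp : 1 ≤ p)
    (Θ : Set (Fin nθ → ℝ)) (Vset : Set ((Fin nθ → ℝ) × (Fin nθ → ℝ)))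
    (hV : ∀ θ Δθ : Fin nθ → ℝ, (θ, Δθ) ∈ Vset → θ ∈ Θ ∧ θ + Δθ ∈ Θ)
    (A : (Fin nθ → ℝ) → Matrix (Fin nξ) (Fin nξ) ℝ)
    (B : (Fin nθ → ℝ) → Matrix (Fin nξ) (Fin p × Fin d) ℝ)
    (C : (Fin nθ → ℝ) → Matrix (Fin p × Fin d) (Fin nξ) ℝ)
    (D : (Fin nθ → ℝ) → Matrix (Fin p × Fin d) (Fin p × Fin d) ℝ)
    (U : Matrix (Fin nξ) (Fin d) ℝ)
    (hAU : ∀ θ ∈ Θ, A θ * U = U)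
    (hCU : ∀ θ ∈ Θ, ∀ v : Fin d → ℝ,
      (C θ).mulVec (U.mulVec v) = fun ij => v ij.2)
    (m L : (Fin nθ → ℝ) → ℝ)
    (hmL : ∀ θ ∈ Θ, 0 < m θ ∧ m θ < L θ)
    (a : (Fin nθ → ℝ) → ℝ)
    (ha : ∀ θ ∈ Θ, a θ = Real.sqrt (m θ * (L θ - m θ) / 2))
    (f : EuclideanSpace ℝ (Fin d) → (Fin nθ → ℝ) → ℝ)
    (f' : (Fin nθ → ℝ) → EuclideanSpace ℝ (Fin d) → EuclideanSpace ℝ (Fin d))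
    (hgrad : ∀ θ ∈ Θ, ∀ x, HasGradientAt (fun z => f z θ) (f' θ x) x)
    (hsc : ∀ θ ∈ Θ, ConvexOn ℝ Set.univ (fun z => f z θ - m θ / 2 * ‖z‖ ^ 2))
    (hlip : ∀ θ ∈ Θ, ∀ x y, ‖f' θ x - f' θ y‖ ≤ L θ * ‖x - y‖)
    (xstar : (Fin nθ → ℝ) → EuclideanSpace ℝ (Fin d))
    (hxstar : ∀ θ ∈ Θ, f' θ (xstar θ) = 0)
    (ρ : ℝ) (hρ0 : 0 < ρ) (hρ1 : ρ < 1)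
    (lam : Fin p → ℝ) (hlam : ∀ i, 0 ≤ lam i)
    (γξ γδ : ℝ) (hγξ : 0 ≤ γξ) (hγδ : 0 ≤ γδ)
    (lamLo lamHi : ℝ) (hlo : 0 < lamLo) (hlohi : lamLo ≤ lamHi)
    (P : (Fin nθ → ℝ) → Matrix (Fin nξ ⊕ (Fin p × Fin 4 × Fin d))
      (Fin nξ ⊕ (Fin p × Fin 4 × Fin d)) ℝ)
    (hPsymm : ∀ θ ∈ Θ, (P θ).IsSymm)
    (hPbounds : ∀ θ ∈ Θ, ∀ v : (Fin nξ ⊕ (Fin p × Fin 4 × Fin d)) → ℝ,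
      lamLo * ‖toE v‖ ^ 2 ≤ quadForm (P θ) v ∧
      quadForm (P θ) v ≤ lamHi * ‖toE v‖ ^ 2)
    (hLMI : ∀ θ Δθ : Fin nθ → ℝ, (θ, Δθ) ∈ Vset →
      ∀ (ξt : Fin nξ → ℝ) (ζ : Fin p → Fin 4 → Fin d → ℝ)
        (u : Fin p × Fin d → ℝ) (Δ : Fin nξ → ℝ) (w : Fin p × Fin d → ℝ),
        quadForm (P (θ + Δθ))
            (pack nξ p d ((A θ).mulVec ξt + (B θ).mulVec u + Δ)
              (fun i =>
                ![blk ((C θ).mulVec ξt + (D θ).mulVec u) i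
                    + (fun j => (C θ).mulVec Δ (⟨0, hp⟩, j)),
                  blk u i - blk w i,
                  blk u i - m θ • blk ((C θ).mulVec ξt + (D θ).mulVec u) i,
                  a θ • blk ((C θ).mulVec ξt + (D θ).mulVec u) i]))
          - ρ ^ 2 * quadForm (P θ) (pack nξ p d ξt ζ)
          + (∑ i : Fin p, lam i *
              (dotProduct
                (L θ • blk ((C θ).mulVec ξt + (D θ).mulVec u) i - blk u i
                  - ρ ^ 2 • (L θ • ζ i 0) + ρ ^ 2 • ζ i 1)
                (blk u i - m θ • blk ((C θ).mulVec ξt + (D θ).mulVec u) i)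
               + ρ ^ 2 * ‖toE (ζ i 3)‖ ^ 2
               - ρ ^ 2 * (a θ) ^ 2 * ‖toE (ζ i 0)‖ ^ 2
               + ρ ^ 2 / 2 * ‖toE (ζ i 2)‖ ^ 2
               - ρ ^ 2 / 2 * ‖toE (ζ i 1 - m θ • ζ i 0)‖ ^ 2))
          - γξ * ‖toE Δ‖ ^ 2 - γδ * ‖toE w‖ ^ 2 ≤ 0)
    (θseq : ℕ → Fin nθ → ℝ)
    (hθseq : ∀ k : ℕ, (θseq k, θseq (k + 1) - θseq k) ∈ Vset)
    (ξ : ℕ → Fin nξ → ℝ) (u y : ℕ → Fin p × Fin d → ℝ)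
    (hdyn : ∀ k : ℕ,
      ξ (k + 1) = (A (θseq k)).mulVec (ξ k) + (B (θseq k)).mulVec (u k) ∧
      y k = (C (θseq k)).mulVec (ξ k) + (D (θseq k)).mulVec (u k))
    (hu_grad : ∀ k : ℕ, ∀ i : Fin p,
      toE (blk (u k) i) = f' (θseq k) (toE (blk (y k) i))) :
    ∀ k : ℕ, 1 ≤ k →
      ‖toE (ξ k - U.mulVec (xstar (θseq k)))‖ ^ 2 ≤
        lamHi / lamLo * ρ ^ (2 * k) *
            ‖toE (ξ 0 - U.mulVec (xstar (θseq 0)))‖ ^ 2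
        + (1 / lamLo) * ∑ t ∈ Finset.Icc 1 k, ρ ^ (2 * (k - t)) *
            (γξ * ‖toE (U.mulVec (xstar (θseq (t - 1)))
                - U.mulVec (xstar (θseq t)))‖ ^ 2
             + γδ * ∑ i : Fin p,
                ‖f' (θseq (t - 1)) (toE (blk (y (t - 1)) i))
                  - f' (θseq t) (toE (blk (y (t - 1)) i))‖ ^ 2)
        + (1 / lamLo) * ∑ i : Fin p, lam i *
            ∑ t ∈ Finset.Icc 1 (k - 1), ρ ^ (2 * (k - t)) *
              ((L (θseq t) - m (θseq t)) *
                  (f (toE (blk (y (t - 1)) i)) (θseq t)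
                    - f (xstar (θseq t)) (θseq t))
                - (L (θseq (t - 1)) - m (θseq (t - 1))) *
                  (f (toE (blk (y (t - 1)) i)) (θseq (t - 1))
                    - f (xstar (θseq (t - 1))) (θseq (t - 1)))) := by
  -- basic facts about the parameter sequence
  have hΘ : ∀ j, θseq j ∈ Θ := fun j => (hV _ _ (hθseq j)).1
  have hθnext : ∀ j, θseq j + (θseq (j + 1) - θseq j) = θseq (j + 1) := by
    intro j; abel
  have hmj : ∀ j, 0 < m (θseq j) := fun j => (hmL _ (hΘ j)).1
  have hmLj : ∀ j, m (θseq j) < L (θseq j) := fun j => (hmL _ (hΘ j)).2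
  have haj : ∀ j, a (θseq j) ^ 2 = m (θseq j) * (L (θseq j) - m (θseq j)) / 2 := by
    intro j
    rw [ha _ (hΘ j), Real.sq_sqrt]
    nlinarith [hmj j, hmLj j]
  have hρ2 : 0 ≤ ρ ^ 2 := sq_nonneg ρ
  have hρ21 : ρ ^ 2 ≤ 1 := by nlinarith
  -- abbreviations
  set xiS : ℕ → Fin nξ → ℝ := fun j => U.mulVec (xstar (θseq j)) with hxiS
  set xit : ℕ → Fin nξ → ℝ := fun j => ξ j - xiS j with hxit
  set ζv : ℕ → Fin p → Fin 4 → Fin d → ℝ := fun j =>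
    Nat.casesOn j (fun _ _ _ => 0) (fun t i =>
      ![fun jj => y t (i, jj) - xstar (θseq (t + 1)) jj,
        fun jj => f' (θseq (t + 1)) (toE (blk (y t) i)) jj,
        fun jj => u t (i, jj) - m (θseq t) * (y t (i, jj) - xstar (θseq t) jj),
        fun jj => a (θseq t) * (y t (i, jj) - xstar (θseq t) jj)]) with hζv
  set Vq : ℕ → ℝ := fun j => quadForm (P (θseq j)) (pack nξ p d (xit j) (ζv j)) with hVq
  set wv : ℕ → Fin p × Fin d → ℝ := fun j ij =>
    f' (θseq j) (toE (blk (y j) ij.1)) ij.2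
      - f' (θseq (j + 1)) (toE (blk (y j) ij.1)) ij.2 with hwv
  set Ev : ℕ → ℝ := fun j => γξ * ‖toE (xiS j - xiS (j + 1))‖ ^ 2
    + γδ * ∑ i : Fin p, ‖f' (θseq j) (toE (blk (y j) i))
        - f' (θseq (j + 1)) (toE (blk (y j) i))‖ ^ 2 with hEv
  set Rv : ℕ → Fin p → ℝ := fun j i =>
    (L (θseq j) - m (θseq j)) * (f (toE (blk (y j) i)) (θseq j)
        - f (xstar (θseq j)) (θseq j)
        - m (θseq j) / 2 * ‖toE (blk (y j) i) - xstar (θseq j)‖ ^ 2)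
      - 1 / 2 * ‖f' (θseq j) (toE (blk (y j) i))
        - m (θseq j) • (toE (blk (y j) i) - xstar (θseq j))‖ ^ 2 with hRv
  set Φv : ℕ → Fin p → ℝ := fun t i =>
    (L (θseq t) - m (θseq t)) * (f (toE (blk (y (t - 1)) i)) (θseq t)
        - f (xstar (θseq t)) (θseq t))
      - (L (θseq (t - 1)) - m (θseq (t - 1))) * (f (toE (blk (y (t - 1)) i)) (θseq (t - 1))
        - f (xstar (θseq (t - 1))) (θseq (t - 1))) with hΦv
  set σr : ℕ → Fin p → ℝ := fun j i =>
    dotProduct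
        (L (θseq j) • blk ((C (θseq j)).mulVec (xit j) + (D (θseq j)).mulVec (u j)) i
            - blk (u j) i
            - ρ ^ 2 • (L (θseq j) • ζv j i 0) + ρ ^ 2 • ζv j i 1)
        (blk (u j) i - m (θseq j) • blk ((C (θseq j)).mulVec (xit j)
            + (D (θseq j)).mulVec (u j)) i)
      + ρ ^ 2 * ‖toE (ζv j i 3)‖ ^ 2
      - ρ ^ 2 * (a (θseq j)) ^ 2 * ‖toE (ζv j i 0)‖ ^ 2
      + ρ ^ 2 / 2 * ‖toE (ζv j i 2)‖ ^ 2
      - ρ ^ 2 / 2 * ‖toE (ζv j i 1 - m (θseq j) • ζv j i 0)‖ ^ 2 with hσr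
  -- trajectory identities
  have hstilde : ∀ j, (C (θseq j)).mulVec (xit j) + (D (θseq j)).mulVec (u j)
      = fun ij => y j ij - xstar (θseq j) ij.2 := by
    intro j
    have h2 := hCU (θseq j) (hΘ j) (xstar (θseq j))
    have h3 := (hdyn j).2
    simp only [hxit, hxiS]
    rw [Matrix.mulVec_sub, h2]
    funext ij
    rw [h3]
    simp only [Pi.add_apply, Pi.sub_apply]
    ring
  have hblk : ∀ j i, blk ((C (θseq j)).mulVec (xit j) + (D (θseq j)).mulVec (u j)) i
      = fun jj => y j (i, jj) - xstar (θseq j) jj := by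
    intro j i
    funext jj
    exact congrFun (hstilde j) (i, jj)
  have hdelta : ∀ j, (C (θseq j)).mulVec (xiS j - xiS (j + 1))
      = fun ij => xstar (θseq j) ij.2 - xstar (θseq (j + 1)) ij.2 := by
    intro j
    simp only [hxiS]
    rw [Matrix.mulVec_sub, hCU _ (hΘ j) (xstar (θseq j)),
      hCU _ (hΘ j) (xstar (θseq (j + 1)))]
    rfl
  have hxit_succ : ∀ j, xit (j + 1) = (A (θseq j)).mulVec (xit j)
      + (B (θseq j)).mulVec (u j) + (xiS j - xiS (j + 1)) := by
    intro j
    have hAUv : (A (θseq j)).mulVec (U.mulVec (xstar (θseq j)))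
        = U.mulVec (xstar (θseq j)) := by
      rw [Matrix.mulVec_mulVec, hAU _ (hΘ j)]
    simp only [hxit, hxiS]
    rw [Matrix.mulVec_sub, hAUv, (hdyn j).1]
    abel
  have huij : ∀ j i jj, u j (i, jj) = f' (θseq j) (toE (blk (y j) i)) jj := by
    intro j i jj
    have hq := congrArg (fun (q : EuclideanSpace ℝ (Fin d)) => q jj) (hu_grad j i)
    simpa [toE, blk] using hq
  -- the filter state matches the next-state blocks prescribed by the LMI
  have hζeq : ∀ j, (fun i =>
      ![blk ((C (θseq j)).mulVec (xit j) + (D (θseq j)).mulVec (u j)) i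
          + (fun jj => (C (θseq j)).mulVec (xiS j - xiS (j + 1)) (⟨0, hp⟩, jj)),
        blk (u j) i - blk (wv j) i,
        blk (u j) i - m (θseq j) • blk ((C (θseq j)).mulVec (xit j)
          + (D (θseq j)).mulVec (u j)) i,
        a (θseq j) • blk ((C (θseq j)).mulVec (xit j)
          + (D (θseq j)).mulVec (u j)) i]) = ζv (j + 1) := by
    intro j
    funext i
    have hz : ζv (j + 1) i = ![fun jj => y j (i, jj) - xstar (θseq (j + 1)) jj,
        fun jj => f' (θseq (j + 1)) (toE (blk (y j) i)) jj,
        fun jj => u j (i, jj) - m (θseq j) * (y j (i, jj) - xstar (θseq j) jj),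
        fun jj => a (θseq j) * (y j (i, jj) - xstar (θseq j) jj)] := by
      simp only [hζv]
    rw [hz]
    have e0 : blk ((C (θseq j)).mulVec (xit j) + (D (θseq j)).mulVec (u j)) i
        + (fun jj => (C (θseq j)).mulVec (xiS j - xiS (j + 1)) (⟨0, hp⟩, jj))
        = fun jj => y j (i, jj) - xstar (θseq (j + 1)) jj := by
      funext jj
      rw [Pi.add_apply, hblk j i, hdelta j]
      simp only []
      ring
    have e1 : blk (u j) i - blk (wv j) i
        = fun jj => f' (θseq (j + 1)) (toE (blk (y j) i)) jj := by
      funext jj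
      rw [Pi.sub_apply]
      simp only [blk, hwv]
      rw [huij j i jj]
      ring
    have e2 : blk (u j) i - m (θseq j) • blk ((C (θseq j)).mulVec (xit j)
          + (D (θseq j)).mulVec (u j)) i
        = fun jj => u j (i, jj) - m (θseq j) * (y j (i, jj) - xstar (θseq j) jj) := by
      funext jj
      rw [Pi.sub_apply, Pi.smul_apply, hblk j i]
      simp only [blk, smul_eq_mul]
    have e3 : a (θseq j) • blk ((C (θseq j)).mulVec (xit j)
          + (D (θseq j)).mulVec (u j)) i
        = fun jj => a (θseq j) * (y j (i, jj) - xstar (θseq j) jj) := by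
      funext jj
      rw [Pi.smul_apply, hblk j i]
      simp only [smul_eq_mul]
    rw [e0, e1, e2, e3]
  -- one step of the dissipation inequality
  have hstep : ∀ j, Vq (j + 1) ≤ ρ ^ 2 * Vq j + Ev j - ∑ i, lam i * σr j i := by
    intro j
    have H := hLMI (θseq j) (θseq (j + 1) - θseq j) (hθseq j) (xit j) (ζv j) (u j)
      (xiS j - xiS (j + 1)) (wv j)
    rw [hθnext j, ← hxit_succ j, hζeq j] at H
    have hwn : ‖toE (wv j)‖ ^ 2 = ∑ i : Fin p, ‖f' (θseq j) (toE (blk (y j) i))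
        - f' (θseq (j + 1)) (toE (blk (y j) i))‖ ^ 2 := by
      rw [stack_norm_sq]
      apply Finset.sum_congr rfl
      intro i _
      have heq : toE (blk (wv j) i) = f' (θseq j) (toE (blk (y j) i))
          - f' (θseq (j + 1)) (toE (blk (y j) i)) := by
        ext jj
        simp only [toE, blk, hwv, PiLp.sub_apply, WithLp.ofLp_toLp]
      rw [heq]
    rw [hwn] at H
    simp only [hVq, hEv, hσr]
    linarith [H]
  -- pointwise descriptions of the filter state
  have hz0 : ∀ t i, ζv (t + 1) i 0 = fun jj => y t (i, jj) - xstar (θseq (t + 1)) jj := by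
    intro t i; simp only [hζv, Matrix.cons_val_zero]
  have hz1 : ∀ t i, ζv (t + 1) i 1
      = fun jj => f' (θseq (t + 1)) (toE (blk (y t) i)) jj := by
    intro t i; simp only [hζv, Matrix.cons_val_one, Matrix.head_cons, Matrix.cons_val_zero]
  have hz2 : ∀ t i, ζv (t + 1) i 2
      = fun jj => u t (i, jj) - m (θseq t) * (y t (i, jj) - xstar (θseq t) jj) := by
    intro t i
    simp only [hζv, Matrix.cons_val_two, Matrix.vecTail, Matrix.vecHead]
    rfl
  have hz3 : ∀ t i, ζv (t + 1) i 3
      = fun jj => a (θseq t) * (y t (i, jj) - xstar (θseq t) jj) := by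
    intro t i
    simp only [hζv, Matrix.cons_val_three, Matrix.vecTail, Matrix.vecHead]
    rfl
  -- the supply rate at step 0 dominates the stored energy
  have hσ0 : ∀ i, Rv 0 i ≤ σr 0 i := by
    intro i
    have hs := sigma_step0 (m (θseq 0)) (L (θseq 0)) (hmLj 0)
      (fun z => f z (θseq 0)) (f' (θseq 0)) (xstar (θseq 0))
      (fun z => hgrad _ (hΘ 0) z) (hsc _ (hΘ 0)) (hlip _ (hΘ 0))
      (hxstar _ (hΘ 0)) (toE (blk (y 0) i))
    have hz00 : ζv 0 = fun _ _ _ => (0 : ℝ) := rfl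
    have hV1 : toE (L (θseq 0) • blk ((C (θseq 0)).mulVec (xit 0)
          + (D (θseq 0)).mulVec (u 0)) i - blk (u 0) i
          - ρ ^ 2 • (L (θseq 0) • ζv 0 i 0) + ρ ^ 2 • ζv 0 i 1)
        = L (θseq 0) • (toE (blk (y 0) i) - xstar (θseq 0))
          - f' (θseq 0) (toE (blk (y 0) i)) := by
      rw [hblk 0 i, hz00]
      ext jj
      simp only [toE, blk, WithLp.ofLp_toLp, Pi.add_apply, Pi.sub_apply, Pi.smul_apply,
        smul_eq_mul, PiLp.sub_apply, PiLp.smul_apply, huij]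
      ring
    have hV2 : toE (blk (u 0) i - m (θseq 0) • blk ((C (θseq 0)).mulVec (xit 0)
          + (D (θseq 0)).mulVec (u 0)) i)
        = f' (θseq 0) (toE (blk (y 0) i))
          - m (θseq 0) • (toE (blk (y 0) i) - xstar (θseq 0)) := by
      rw [hblk 0 i]
      ext jj
      simp only [toE, blk, WithLp.ofLp_toLp, Pi.sub_apply, Pi.smul_apply, smul_eq_mul,
        PiLp.sub_apply, PiLp.smul_apply, huij]
    have hN0 : toE (ζv 0 i 0) = (0 : EuclideanSpace ℝ (Fin d)) := by
      rw [hz00]; ext jj; simp [toE]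
    have hN2 : toE (ζv 0 i 2) = (0 : EuclideanSpace ℝ (Fin d)) := by
      rw [hz00]; ext jj; simp [toE]
    have hN3 : toE (ζv 0 i 3) = (0 : EuclideanSpace ℝ (Fin d)) := by
      rw [hz00]; ext jj; simp [toE]
    have hN1 : toE (ζv 0 i 1 - m (θseq 0) • ζv 0 i 0)
        = (0 : EuclideanSpace ℝ (Fin d)) := by
      rw [hz00]; ext jj; simp [toE]
    have hσeq : σr 0 i = ⟪L (θseq 0) • (toE (blk (y 0) i) - xstar (θseq 0))
          - f' (θseq 0) (toE (blk (y 0) i)),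
        f' (θseq 0) (toE (blk (y 0) i))
          - m (θseq 0) • (toE (blk (y 0) i) - xstar (θseq 0))⟫ := by
      simp only [hσr]
      rw [dotP_toE, hV1, hV2, hN0, hN1, hN2, hN3]
      simp [norm_zero]
    rw [hσeq]
    simp only [hRv]
    linarith [hs]
  -- the supply rate at later steps
  have hσk : ∀ t i, Rv (t + 1) i - ρ ^ 2 * Rv t i - ρ ^ 2 * Φv (t + 1) i
      ≤ σr (t + 1) i := by
    intro t i
    have hs := sigma_step (ρ ^ 2) (m (θseq t)) (L (θseq t))
      (m (θseq (t + 1))) (L (θseq (t + 1))) (a (θseq t)) (a (θseq (t + 1)))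
      hρ2 hρ21 (hmLj (t + 1)) (haj t) (haj (t + 1))
      (fun z => f z (θseq t)) (fun z => f z (θseq (t + 1)))
      (f' (θseq t)) (f' (θseq (t + 1))) (xstar (θseq t)) (xstar (θseq (t + 1)))
      (fun z => hgrad _ (hΘ (t + 1)) z) (hsc _ (hΘ (t + 1))) (hlip _ (hΘ (t + 1)))
      (hxstar _ (hΘ (t + 1))) (toE (blk (y t) i)) (toE (blk (y (t + 1)) i))
    have hV1 : toE (L (θseq (t + 1)) • blk ((C (θseq (t + 1))).mulVec (xit (t + 1))
          + (D (θseq (t + 1))).mulVec (u (t + 1))) i - blk (u (t + 1)) i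
          - ρ ^ 2 • (L (θseq (t + 1)) • ζv (t + 1) i 0) + ρ ^ 2 • ζv (t + 1) i 1)
        = L (θseq (t + 1)) • (toE (blk (y (t + 1)) i) - xstar (θseq (t + 1)))
          - f' (θseq (t + 1)) (toE (blk (y (t + 1)) i))
          - ρ ^ 2 • (L (θseq (t + 1)) • (toE (blk (y t) i) - xstar (θseq (t + 1))))
          + ρ ^ 2 • f' (θseq (t + 1)) (toE (blk (y t) i)) := by
      rw [hblk (t + 1) i, hz0 t i, hz1 t i]
      ext jj
      simp only [toE, blk, WithLp.ofLp_toLp, Pi.add_apply, Pi.sub_apply, Pi.smul_apply,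
        smul_eq_mul, PiLp.add_apply, PiLp.sub_apply, PiLp.smul_apply, huij]
    have hV2 : toE (blk (u (t + 1)) i - m (θseq (t + 1))
          • blk ((C (θseq (t + 1))).mulVec (xit (t + 1))
            + (D (θseq (t + 1))).mulVec (u (t + 1))) i)
        = f' (θseq (t + 1)) (toE (blk (y (t + 1)) i))
          - m (θseq (t + 1)) • (toE (blk (y (t + 1)) i) - xstar (θseq (t + 1))) := by
      rw [hblk (t + 1) i]
      ext jj
      simp only [toE, blk, WithLp.ofLp_toLp, Pi.sub_apply, Pi.smul_apply, smul_eq_mul,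
        PiLp.sub_apply, PiLp.smul_apply, huij]
    have hN0 : toE (ζv (t + 1) i 0)
        = toE (blk (y t) i) - xstar (θseq (t + 1)) := by
      rw [hz0 t i]
      ext jj
      simp only [toE, blk, WithLp.ofLp_toLp, PiLp.sub_apply]
    have hN1 : toE (ζv (t + 1) i 1 - m (θseq (t + 1)) • ζv (t + 1) i 0)
        = f' (θseq (t + 1)) (toE (blk (y t) i))
          - m (θseq (t + 1)) • (toE (blk (y t) i) - xstar (θseq (t + 1))) := by
      rw [hz0 t i, hz1 t i]
      ext jj
      simp only [toE, blk, WithLp.ofLp_toLp, Pi.sub_apply, Pi.smul_apply, smul_eq_mul,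
        PiLp.sub_apply, PiLp.smul_apply]
    have hN2 : toE (ζv (t + 1) i 2)
        = f' (θseq t) (toE (blk (y t) i))
          - m (θseq t) • (toE (blk (y t) i) - xstar (θseq t)) := by
      rw [hz2 t i]
      ext jj
      simp only [toE, blk, WithLp.ofLp_toLp, PiLp.sub_apply, PiLp.smul_apply, smul_eq_mul, huij]
    have hN3 : toE (ζv (t + 1) i 3)
        = a (θseq t) • (toE (blk (y t) i) - xstar (θseq t)) := by
      rw [hz3 t i]
      ext jj
      simp only [toE, blk, WithLp.ofLp_toLp, PiLp.sub_apply, PiLp.smul_apply, smul_eq_mul]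
    have hσeq : σr (t + 1) i
        = ⟪L (θseq (t + 1)) • (toE (blk (y (t + 1)) i) - xstar (θseq (t + 1)))
              - f' (θseq (t + 1)) (toE (blk (y (t + 1)) i))
              - ρ ^ 2 • (L (θseq (t + 1)) • (toE (blk (y t) i) - xstar (θseq (t + 1))))
              + ρ ^ 2 • f' (θseq (t + 1)) (toE (blk (y t) i)),
            f' (θseq (t + 1)) (toE (blk (y (t + 1)) i))
              - m (θseq (t + 1)) • (toE (blk (y (t + 1)) i) - xstar (θseq (t + 1)))⟫
          + ρ ^ 2 * ‖a (θseq t) • (toE (blk (y t) i) - xstar (θseq t))‖ ^ 2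
          - ρ ^ 2 * (a (θseq (t + 1))) ^ 2
            * ‖toE (blk (y t) i) - xstar (θseq (t + 1))‖ ^ 2
          + ρ ^ 2 / 2 * ‖f' (θseq t) (toE (blk (y t) i))
            - m (θseq t) • (toE (blk (y t) i) - xstar (θseq t))‖ ^ 2
          - ρ ^ 2 / 2 * ‖f' (θseq (t + 1)) (toE (blk (y t) i))
            - m (θseq (t + 1)) • (toE (blk (y t) i) - xstar (θseq (t + 1)))‖ ^ 2 := by
      simp only [hσr]
      rw [dotP_toE, hV1, hV2, hN0, hN1, hN2, hN3]
    rw [hσeq]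
    simp only [hRv, hΦv, Nat.add_sub_cancel]
    linarith [hs]
  -- nonnegativity of the stored energy
  have hRpos : ∀ j i, 0 ≤ Rv j i := by
    intro j i
    have hint := shifted_interp (fun z => f z (θseq j)) (f' (θseq j))
      (m (θseq j)) (L (θseq j)) (hmLj j) (fun z => hgrad _ (hΘ j) z)
      (hsc _ (hΘ j)) (hlip _ (hΘ j)) (xstar (θseq j))
    have hmin : f (xstar (θseq j)) (θseq j) - f (xstar (θseq j)) (θseq j)
        - m (θseq j) / 2 * ‖xstar (θseq j) - xstar (θseq j)‖ ^ 2 = 0 := by simp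
    have hg0 : f' (θseq j) (xstar (θseq j))
        - m (θseq j) • (xstar (θseq j) - xstar (θseq j)) = 0 := by
      simp [hxstar _ (hΘ j)]
    have hRn := R_nonneg (fun z => f z (θseq j) - f (xstar (θseq j)) (θseq j)
        - m (θseq j) / 2 * ‖z - xstar (θseq j)‖ ^ 2)
      (fun z => f' (θseq j) z - m (θseq j) • (z - xstar (θseq j)))
      (L (θseq j) - m (θseq j)) (xstar (θseq j))
      (by linarith [hmLj j]) hint hmin hg0 (toE (blk (y j) i))
    simp only [hRv]
    linarith [hRn]
  -- the unrolled dissipation inequality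
  have hInv : ∀ n : ℕ, Vq (n + 1) + ∑ i, lam i * Rv n i
      ≤ ρ ^ (2 * (n + 1)) * Vq 0
        + (∑ t ∈ Finset.Icc 1 (n + 1), ρ ^ (2 * (n + 1 - t)) * Ev (t - 1))
        + ∑ i, lam i * (∑ t ∈ Finset.Icc 1 n, ρ ^ (2 * (n + 1 - t)) * Φv t i) := by
    intro n
    induction n with
    | zero =>
      have h1 := hstep 0
      have h2 : ∑ i, lam i * Rv 0 i ≤ ∑ i, lam i * σr 0 i :=
        Finset.sum_le_sum fun i _ => mul_le_mul_of_nonneg_left (hσ0 i) (hlam i)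
      have hIcc0 : Finset.Icc 1 0 = (∅ : Finset ℕ) := by
        apply Finset.Icc_eq_empty
        omega
      simp only [Finset.Icc_self, Finset.sum_singleton, Nat.sub_self, mul_zero,
        pow_zero, one_mul, hIcc0, Finset.sum_empty, Finset.sum_const_zero,
        add_zero, mul_one, Nat.sub_self]
      have hpow : ρ ^ (2 * 1) = ρ ^ 2 := by norm_num
      rw [hpow]
      linarith [h1, h2]
    | succ n ih =>
      have h1 := hstep (n + 1)
      have hsum : ∑ i, lam i * Rv (n + 1) i
          ≤ ∑ i, lam i * σr (n + 1) i
            + ρ ^ 2 * ∑ i, lam i * Rv n i + ρ ^ 2 * ∑ i, lam i * Φv (n + 1) i := by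
        have hper : ∀ i ∈ Finset.univ, lam i * Rv (n + 1) i
            ≤ lam i * σr (n + 1) i + ρ ^ 2 * (lam i * Rv n i)
              + ρ ^ 2 * (lam i * Φv (n + 1) i) := by
          intro i _
          nlinarith [mul_le_mul_of_nonneg_left (hσk n i) (hlam i)]
        have hS := Finset.sum_le_sum hper
        rw [Finset.sum_add_distrib, Finset.sum_add_distrib, ← Finset.mul_sum,
          ← Finset.mul_sum] at hS
        exact hS
      have hSE : ∑ t ∈ Finset.Icc 1 (n + 1 + 1), ρ ^ (2 * (n + 1 + 1 - t)) * Ev (t - 1)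
          = ρ ^ 2 * ∑ t ∈ Finset.Icc 1 (n + 1), ρ ^ (2 * (n + 1 - t)) * Ev (t - 1)
            + Ev (n + 1) := by
        rw [Finset.sum_Icc_succ_top (by omega : 1 ≤ n + 1 + 1), Finset.mul_sum]
        simp only [Nat.sub_self, mul_zero, pow_zero, one_mul, Nat.add_sub_cancel]
        congr 1
        apply Finset.sum_congr rfl
        intro t ht
        have htn : t ≤ n + 1 := (Finset.mem_Icc.mp ht).2
        rw [show 2 * (n + 1 + 1 - t) = 2 * (n + 1 - t) + 2 by omega, pow_add]
        ring
      have hΦtot : ∑ i, lam i * (∑ t ∈ Finset.Icc 1 (n + 1),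
            ρ ^ (2 * (n + 1 + 1 - t)) * Φv t i)
          = ρ ^ 2 * (∑ i, lam i * ∑ t ∈ Finset.Icc 1 n,
              ρ ^ (2 * (n + 1 - t)) * Φv t i)
            + ρ ^ 2 * ∑ i, lam i * Φv (n + 1) i := by
        rw [Finset.mul_sum, Finset.mul_sum, ← Finset.sum_add_distrib]
        apply Finset.sum_congr rfl
        intro i _
        have hSΦ : ∑ t ∈ Finset.Icc 1 (n + 1), ρ ^ (2 * (n + 1 + 1 - t)) * Φv t i
            = ρ ^ 2 * ∑ t ∈ Finset.Icc 1 n, ρ ^ (2 * (n + 1 - t)) * Φv t i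
              + ρ ^ 2 * Φv (n + 1) i := by
          rw [Finset.sum_Icc_succ_top (by omega : 1 ≤ n + 1), Finset.mul_sum]
          rw [show 2 * (n + 1 + 1 - (n + 1)) = 2 by omega]
          congr 1
          apply Finset.sum_congr rfl
          intro t ht
          have htn : t ≤ n := (Finset.mem_Icc.mp ht).2
          rw [show 2 * (n + 1 + 1 - t) = 2 * (n + 1 - t) + 2 by omega, pow_add]
          ring
        rw [hSΦ]
        ring
      have hpow : ρ ^ (2 * (n + 1 + 1)) = ρ ^ 2 * ρ ^ (2 * (n + 1)) := by
        rw [show 2 * (n + 1 + 1) = 2 * (n + 1) + 2 by ring, pow_add]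
        ring
      have ihρ := mul_le_mul_of_nonneg_left ih hρ2
      rw [hSE, hΦtot, hpow]
      nlinarith [h1, hsum, ihρ]
  -- final assembly
  intro k hk
  obtain ⟨n, rfl⟩ : ∃ n, k = n + 1 := ⟨k - 1, by omega⟩
  have hlow : lamLo * ‖toE (xit (n + 1))‖ ^ 2 ≤ Vq (n + 1) := by
    have h1 := (hPbounds _ (hΘ (n + 1)) (pack nξ p d (xit (n + 1)) (ζv (n + 1)))).1
    have h2 : ‖toE (xit (n + 1))‖ ^ 2
        ≤ ‖toE (pack nξ p d (xit (n + 1)) (ζv (n + 1)))‖ ^ 2 := by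
      rw [pack_norm_sq]
      have hnn : 0 ≤ ∑ q : Fin p × Fin 4 × Fin d, (ζv (n + 1) q.1 q.2.1 q.2.2) ^ 2 :=
        Finset.sum_nonneg fun q _ => sq_nonneg _
      linarith
    have h3 := mul_le_mul_of_nonneg_left h2 (le_of_lt hlo)
    simp only [hVq]
    linarith [h1, h3]
  have hhigh : Vq 0 ≤ lamHi * ‖toE (xit 0)‖ ^ 2 := by
    have h1 := (hPbounds _ (hΘ 0) (pack nξ p d (xit 0) (ζv 0))).2
    have h2 : ‖toE (pack nξ p d (xit 0) (ζv 0))‖ ^ 2 = ‖toE (xit 0)‖ ^ 2 := by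
      rw [pack_norm_sq]
      have hz00 : ζv 0 = fun _ _ _ => (0 : ℝ) := rfl
      rw [hz00]
      simp
    rw [h2] at h1
    simp only [hVq]
    exact h1
  have hmain := hInv n
  have hRsum : 0 ≤ ∑ i, lam i * Rv n i :=
    Finset.sum_nonneg fun i _ => mul_nonneg (hlam i) (hRpos n i)
  have hhighρ := mul_le_mul_of_nonneg_left hhigh (pow_nonneg (le_of_lt hρ0) (2 * (n + 1)))
  -- identify the error sums appearing in the goal
  have hgoalE : ∑ t ∈ Finset.Icc 1 (n + 1), ρ ^ (2 * (n + 1 - t)) *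
        (γξ * ‖toE (U.mulVec (xstar (θseq (t - 1)))
            - U.mulVec (xstar (θseq t)))‖ ^ 2
          + γδ * ∑ i : Fin p, ‖f' (θseq (t - 1)) (toE (blk (y (t - 1)) i))
            - f' (θseq t) (toE (blk (y (t - 1)) i))‖ ^ 2)
      = ∑ t ∈ Finset.Icc 1 (n + 1), ρ ^ (2 * (n + 1 - t)) * Ev (t - 1) := by
    apply Finset.sum_congr rfl
    intro t ht
    have h1t : 1 ≤ t := (Finset.mem_Icc.mp ht).1
    have htt : t - 1 + 1 = t := by omega
    simp only [hEv, hxiS, htt]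
  have hgoalΦ : ∑ i, lam i * ∑ t ∈ Finset.Icc 1 (n + 1 - 1), ρ ^ (2 * (n + 1 - t)) *
        ((L (θseq t) - m (θseq t)) *
            (f (toE (blk (y (t - 1)) i)) (θseq t) - f (xstar (θseq t)) (θseq t))
          - (L (θseq (t - 1)) - m (θseq (t - 1))) *
            (f (toE (blk (y (t - 1)) i)) (θseq (t - 1))
              - f (xstar (θseq (t - 1))) (θseq (t - 1))))
      = ∑ i, lam i * ∑ t ∈ Finset.Icc 1 n, ρ ^ (2 * (n + 1 - t)) * Φv t i := by
    simp only [hΦv, Nat.add_sub_cancel]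
  rw [show ξ (n + 1) - U.mulVec (xstar (θseq (n + 1))) = xit (n + 1) from rfl,
    show ξ 0 - U.mulVec (xstar (θseq 0)) = xit 0 from rfl, hgoalE, hgoalΦ]
  -- numeric conclusion
  have hX : lamLo * ‖toE (xit (n + 1))‖ ^ 2
      ≤ ρ ^ (2 * (n + 1)) * (lamHi * ‖toE (xit 0)‖ ^ 2)
        + (∑ t ∈ Finset.Icc 1 (n + 1), ρ ^ (2 * (n + 1 - t)) * Ev (t - 1))
        + ∑ i, lam i * (∑ t ∈ Finset.Icc 1 n, ρ ^ (2 * (n + 1 - t)) * Φv t i) := by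
    linarith [hlow, hmain, hRsum, hhighρ]
  have hsplit : (1 / lamLo) * (ρ ^ (2 * (n + 1)) * (lamHi * ‖toE (xit 0)‖ ^ 2)
        + (∑ t ∈ Finset.Icc 1 (n + 1), ρ ^ (2 * (n + 1 - t)) * Ev (t - 1))
        + ∑ i, lam i * (∑ t ∈ Finset.Icc 1 n, ρ ^ (2 * (n + 1 - t)) * Φv t i))
      = lamHi / lamLo * ρ ^ (2 * (n + 1)) * ‖toE (xit 0)‖ ^ 2
        + (1 / lamLo) * (∑ t ∈ Finset.Icc 1 (n + 1), ρ ^ (2 * (n + 1 - t)) * Ev (t - 1))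
        + (1 / lamLo) * ∑ i, lam i *
            (∑ t ∈ Finset.Icc 1 n, ρ ^ (2 * (n + 1 - t)) * Φv t i) := by
    ring
  have hN : ‖toE (xit (n + 1))‖ ^ 2
      ≤ (1 / lamLo) * (ρ ^ (2 * (n + 1)) * (lamHi * ‖toE (xit 0)‖ ^ 2)
        + (∑ t ∈ Finset.Icc 1 (n + 1), ρ ^ (2 * (n + 1 - t)) * Ev (t - 1))
        + ∑ i, lam i * (∑ t ∈ Finset.Icc 1 n, ρ ^ (2 * (n + 1 - t)) * Φv t i)) := by
    rw [← mul_le_mul_iff_right₀ hlo]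
    have hcalc : lamLo * ((1 / lamLo) * (ρ ^ (2 * (n + 1)) * (lamHi * ‖toE (xit 0)‖ ^ 2)
        + (∑ t ∈ Finset.Icc 1 (n + 1), ρ ^ (2 * (n + 1 - t)) * Ev (t - 1))
        + ∑ i, lam i * (∑ t ∈ Finset.Icc 1 n, ρ ^ (2 * (n + 1 - t)) * Φv t i)))
        = ρ ^ (2 * (n + 1)) * (lamHi * ‖toE (xit 0)‖ ^ 2)
          + (∑ t ∈ Finset.Icc 1 (n + 1), ρ ^ (2 * (n + 1 - t)) * Ev (t - 1))
          + ∑ i, lam i * (∑ t ∈ Finset.Icc 1 n, ρ ^ (2 * (n + 1 - t)) * Φv t i) := by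
      field_simp
    rw [hcalc]
    exact hX
  rw [hsplit] at hN
  exact hN
end
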